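/- arXiv:1409.2736 — 5 statements merged into one kernel-verified Lean document; each statement's English description precedes it below -/
import Mathlib

section
/- For 0 ≤ n ≤ N₁ - 1 with N₁ = R - N and √R ≪ N < R, the partial sum of the exponential series satisfies ∑_{0 ≤ n ≤ N₁-1} R^n/n! < (R/N) · R^{N₁}/N₁!. -/
open Finset

/-- Geometric-series bound on the lower tail of the Taylor series of `e^R`:
for positive integers `N < R` with `√R ≤ N`, setting `N₁ = R - N`,
`∑_{0 ≤ n ≤ N₁ - 1} R^n / n! < (R/N) · R^{N₁}/N₁!`. -/
theorem stmt_0 (R N : ℕ) (hN : 0 < N) (hNR : N < R)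
    (hsqrt : Real.sqrt R ≤ N) :
    ∑ n ∈ Finset.range (R - N), (R : ℝ) ^ n / (Nat.factorial n) <
      ((R : ℝ) / N) * ((R : ℝ) ^ (R - N) / (Nat.factorial (R - N))) := by
  have hRpos : 0 < R := lt_trans hN hNR
  have hR : (0:ℝ) < R := by exact_mod_cast hRpos
  have hNr : (0:ℝ) < N := by exact_mod_cast hN
  set N₁ := R - N with hN₁def
  have hN₁ : 0 < N₁ := Nat.sub_pos_of_lt hNR
  have hN₁lt : N₁ < R := Nat.sub_lt hRpos hN
  have hN₁cast : (N₁ : ℝ) = (R : ℝ) - N := by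
    rw [hN₁def]; push_cast [Nat.cast_sub (le_of_lt hNR)]; ring
  set q : ℝ := (N₁ : ℝ) / R with hq
  have hq0 : 0 < q := by positivity
  have hq1 : q < 1 := by
    rw [hq, div_lt_one hR]; exact_mod_cast hN₁lt
  set a : ℕ → ℝ := fun n => (R:ℝ) ^ n / (Nat.factorial n) with ha
  have hapos : ∀ n, 0 < a n := by
    intro n
    have : (0:ℝ) < (Nat.factorial n : ℝ) := by exact_mod_cast Nat.factorial_pos n
    positivity
  have key : ∀ k, k ≤ N₁ → a (N₁ - k) ≤ a N₁ * q ^ k := by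
    intro k
    induction k with
    | zero => intro _; simp
    | succ k ih =>
      intro hk
      have ih' := ih (le_of_lt (Nat.lt_of_succ_le hk))
      have hm : N₁ - (k+1) + 1 = N₁ - k := by omega
      have hstep : a (N₁ - (k+1)) ≤ a (N₁ - k) * q := by
        set m := N₁ - (k+1) with hmdef
        have heq : a m = a (m+1) * ((m+1 : ℝ) / R) := by
          rw [ha]
          simp only [Nat.factorial_succ, pow_succ, Nat.cast_mul, Nat.cast_add, Nat.cast_one]
          have hfm : ((Nat.factorial m : ℝ)) ≠ 0 := by
            exact_mod_cast (Nat.factorial_pos m).ne'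
          field_simp
        have hle : ((m+1 : ℝ)) / R ≤ q := by
          rw [hq]
          gcongr
          have : m + 1 ≤ N₁ := by omega
          exact_mod_cast this
        calc a m = a (m+1) * ((m+1 : ℝ) / R) := heq
          _ ≤ a (m+1) * q := mul_le_mul_of_nonneg_left hle (le_of_lt (hapos _))
          _ = a (N₁ - k) * q := by rw [hm]
      calc a (N₁ - (k+1)) ≤ a (N₁ - k) * q := hstep
        _ ≤ (a N₁ * q ^ k) * q :=
            mul_le_mul_of_nonneg_right ih' (le_of_lt hq0)
        _ = a N₁ * q ^ (k+1) := by ring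
  have hsum1 : ∑ n ∈ Finset.range N₁, a n ≤ a N₁ * ∑ n ∈ Finset.range N₁, q ^ (N₁ - n) := by
    rw [Finset.mul_sum]
    apply Finset.sum_le_sum
    intro n hn
    have hn' : n < N₁ := Finset.mem_range.mp hn
    have := key (N₁ - n) (Nat.sub_le _ _)
    rwa [Nat.sub_sub_self (le_of_lt hn')] at this
  have hreflect : ∑ n ∈ Finset.range N₁, q ^ (N₁ - n) = q * ∑ k ∈ Finset.range N₁, q ^ k := by
    rw [Finset.mul_sum]
    rw [← Finset.sum_range_reflect (fun j => q ^ (N₁ - j)) N₁]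
    apply Finset.sum_congr rfl
    intro j hj
    have hj' : j < N₁ := Finset.mem_range.mp hj
    have : N₁ - (N₁ - 1 - j) = j + 1 := by omega
    rw [this, pow_succ]; ring
  have hgeom : ∑ k ∈ Finset.range N₁, q ^ k ≤ 1 / (1 - q) := by
    have heq : ∑ k ∈ Finset.range N₁, q ^ k = (1 - q ^ N₁) / (1 - q) := by
      rw [geom_sum_eq (ne_of_lt hq1)]
      rw [div_eq_div_iff (by linarith) (by linarith)]
      ring
    rw [heq]
    have h1 : (0:ℝ) < 1 - q := by linarith
    have h2 : (0:ℝ) ≤ q ^ N₁ := by positivity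
    gcongr
    linarith
  have haN₁ : 0 < a N₁ := hapos N₁
  have hfinal : a N₁ * (q * (1 / (1 - q))) < ((R : ℝ) / N) * a N₁ := by
    have h1q : 1 - q = (N : ℝ) / R := by
      rw [hq, hN₁cast]; field_simp; ring
    have h2 : q * (1 / (1 - q)) = ((R:ℝ) - N) / N := by
      rw [h1q, hq, hN₁cast]; field_simp
    have h3 : ((R:ℝ) - N) / N < (R:ℝ) / N := by
      gcongr
      linarith
    rw [h2]
    calc a N₁ * (((R:ℝ) - N) / N) < a N₁ * ((R:ℝ) / N) :=
          mul_lt_mul_of_pos_left h3 haN₁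
      _ = (R:ℝ) / N * a N₁ := mul_comm _ _
  calc ∑ n ∈ Finset.range N₁, a n
      ≤ a N₁ * ∑ n ∈ Finset.range N₁, q ^ (N₁ - n) := hsum1
    _ = a N₁ * (q * ∑ k ∈ Finset.range N₁, q ^ k) := by rw [hreflect]
    _ ≤ a N₁ * (q * (1 / (1 - q))) := by
        apply mul_le_mul_of_nonneg_left _ (le_of_lt haN₁)
        exact mul_le_mul_of_nonneg_left hgeom (le_of_lt hq0)
    _ < ((R : ℝ) / N) * a N₁ := hfinal
end

section
/- Let ξ : ℤ₊ → ℂ be a bounded sequence and F_ξ(z) = ∑_{n≥0} ξ(n) z^n/n!. For every ε > 0 there exists C_ε such that for all integers R ≥ 2, N = ⌊R^{1/2} log R⌋, and all real θ: |F_ξ(R e(θ))| ≥ μ(R) (|W_R(θ)| − C_ε R^ε), where μ(R) = e^R/√(2πR), e(θ) = e^{2πiθ}, and W_R(θ) = ∑_{|n| ≤ N} ξ(n+R) e(nθ) e^{−n²/(2R)}. -/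
open Complex

noncomputable def e (θ : ℝ) : ℂ := Complex.exp (2 * Real.pi * Complex.I * θ)

namespace Lem3

lemma e_norm (θ : ℝ) : ‖e θ‖ = 1 := by
  rw [e, Complex.norm_exp]
  have : (2 * ↑Real.pi * Complex.I * ↑θ).re = 0 := by
    simp [Complex.mul_re, Complex.mul_im]
  rw [this, Real.exp_zero]

lemma e_add (a b : ℝ) : e (a + b) = e a * e b := by
  rw [e, e, e, ← Complex.exp_add]
  push_cast
  ring_nf

lemma e_pow (θ : ℝ) (n : ℕ) : e θ ^ n = e (n * θ) := by
  rw [e, e, ← Complex.exp_nat_mul]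
  push_cast
  ring_nf

/-- The Taylor-coefficient weights `R^n/n!`. -/
noncomputable def tR (R n : ℕ) : ℝ := (R : ℝ) ^ n / n.factorial

lemma tR_pos (R n : ℕ) (hR : 0 < R) : 0 < tR R n := by
  have : (0:ℝ) < (R:ℝ) := by exact_mod_cast hR
  unfold tR; positivity

lemma tR_succ (R n : ℕ) : tR R (n + 1) = tR R n * ((R : ℝ) / (n + 1)) := by
  unfold tR
  rw [Nat.factorial_succ]
  push_cast
  have h1 : ((n:ℝ) + 1) ≠ 0 := by positivity
  have h2 : ((n.factorial : ℝ)) ≠ 0 := by exact_mod_cast n.factorial_ne_zero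
  field_simp
  ring

lemma exp_le_one_add {x : ℝ} (h0 : 0 ≤ x) (h2 : x ≤ 1/2) :
    Real.exp (x - 2 * x ^ 2) ≤ 1 + x := by
  have hx1 : |(-x)| < 1 := by rw [abs_neg, _root_.abs_of_nonneg h0]; linarith
  have := Real.abs_log_sub_add_sum_range_le hx1 1
  simp only [Finset.range_one, Finset.sum_singleton, pow_one] at this
  -- |(-x) + log (1 - (-x))| ≤ |(-x)|^2 / (1 - |(-x)|)
  rw [abs_neg, _root_.abs_of_nonneg h0] at this
  have hles : x ^ 2 / (1 - x) ≤ 2 * x ^ 2 := by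
    rw [div_le_iff₀ (by linarith)]
    nlinarith
  have hlog : x - 2 * x ^ 2 ≤ Real.log (1 + x) := by
    have h' : |(-x) / (0+1) + Real.log (1 - -x)| ≤ x ^ 2 / (1 - x) := by
      convert this using 2 <;> ring_nf
    have := abs_le.mp h'
    have heq : (1 : ℝ) - -x = 1 + x := by ring
    rw [heq] at this
    nlinarith [this.1, this.2]
  calc Real.exp (x - 2 * x ^ 2) ≤ Real.exp (Real.log (1 + x)) := Real.exp_le_exp.mpr hlog
    _ = 1 + x := Real.exp_log (by linarith)

lemma exp_le_one_sub {x : ℝ} (h0 : 0 ≤ x) (h2 : x ≤ 1/2) :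
    Real.exp (-x - 2 * x ^ 2) ≤ 1 - x := by
  have hx1 : |x| < 1 := by rw [_root_.abs_of_nonneg h0]; linarith
  have := Real.abs_log_sub_add_sum_range_le hx1 1
  simp only [Finset.range_one, Finset.sum_singleton, pow_one] at this
  rw [_root_.abs_of_nonneg h0] at this
  have hles : x ^ 2 / (1 - x) ≤ 2 * x ^ 2 := by
    rw [div_le_iff₀ (by linarith)]
    nlinarith
  have hlog : -x - 2 * x ^ 2 ≤ Real.log (1 - x) := by
    have h' : |x / (0+1) + Real.log (1 - x)| ≤ x ^ 2 / (1 - x) := by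
      convert this using 2 <;> ring_nf
    have := abs_le.mp h'
    nlinarith [this.1, this.2]
  calc Real.exp (-x - 2 * x ^ 2) ≤ Real.exp (Real.log (1 - x)) := Real.exp_le_exp.mpr hlog
    _ = 1 - x := Real.exp_log (by linarith)

lemma geom_sum_le_inv {q : ℝ} (h0 : 0 ≤ q) (h1 : q < 1) (n : ℕ) :
    ∑ i ∈ Finset.range n, q ^ i ≤ 1 / (1 - q) := by
  rw [geom_sum_eq (by intro h; rw [h] at h1; exact lt_irrefl 1 h1) n]
  have heq : (q ^ n - 1) / (q - 1) = (1 - q ^ n) / (1 - q) := by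
    rw [← neg_div_neg_eq]; ring_nf
  rw [heq, div_le_div_iff₀ (by linarith) (by linarith)]
  have : 0 ≤ q ^ n := pow_nonneg h0 n
  nlinarith


open Real in


lemma sqrt_pi_le_stirlingSeq (n : ℕ) : Real.sqrt Real.pi ≤ Stirling.stirlingSeq (n + 1) := by
  have htend : Filter.Tendsto (Stirling.stirlingSeq ∘ Nat.succ) Filter.atTop
      (nhds (Real.sqrt Real.pi)) := by
    exact Stirling.tendsto_stirlingSeq_sqrt_pi.comp (Filter.tendsto_add_atTop_nat 1)
  exact Stirling.stirlingSeq'_antitone.le_of_tendsto htend n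

lemma log_stirling_telescope (n m : ℕ) :
    Real.log (Stirling.stirlingSeq (n + 2)) - Real.log (Stirling.stirlingSeq (n + 2 + m)) ≤
      1 / (4 * ((n : ℝ) + 1)) - 1 / (4 * ((n : ℝ) + 1 + m)) := by
  induction m with
  | zero => simp
  | succ m ih =>
    have hstep := Stirling.log_stirlingSeq_sub_log_stirlingSeq_succ (n + m + 1 + 1)
    have harr : n + 2 + (m + 1) = (n + m + 1) + 2 := by ring
    have harr2 : n + 2 + m = (n + m + 1) + 1 := by ring
    rw [harr]
    rw [harr2] at ih
    have hcast : ((n + m + 1 + 1 : ℕ) : ℝ) = (n : ℝ) + 1 + m + 1 := by push_cast; ring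
    rw [hcast] at hstep
    have hq : 1 / (4 * ((n : ℝ) + 1 + m + 1) ^ 2) ≤
        1 / (4 * ((n : ℝ) + 1 + m)) - 1 / (4 * ((n : ℝ) + 1 + m + 1)) := by
      have h1 : (0:ℝ) < (n : ℝ) + 1 + m := by positivity
      rw [div_sub_div _ _ (by positivity) (by positivity), le_div_iff₀ (by positivity),
        div_mul_eq_mul_div, div_le_iff₀ (by positivity)]
      ring_nf
      nlinarith
    have := add_le_add ih hstep
    push_cast
    ring_nf at this hq ⊢
    linarith

lemma stirlingSeq_le (n : ℕ) :
    Stirling.stirlingSeq (n + 2) ≤ Real.sqrt Real.pi * Real.exp (1 / (4 * ((n : ℝ) + 1))) := by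
  have hpos : 0 < Stirling.stirlingSeq (n + 2) := Stirling.stirlingSeq'_pos (n + 1)
  have hlog : Real.log (Stirling.stirlingSeq (n + 2)) ≤
      Real.log (Real.sqrt Real.pi) + 1 / (4 * ((n : ℝ) + 1)) := by
    have htends : Filter.Tendsto
        (fun m : ℕ => Real.log (Stirling.stirlingSeq (n + 2 + m)) + 1 / (4 * ((n : ℝ) + 1))
          - 1 / (4 * ((n : ℝ) + 1 + m)))
        Filter.atTop (nhds (Real.log (Real.sqrt Real.pi) + 1 / (4 * ((n : ℝ) + 1)) - 0)) := by
      apply Filter.Tendsto.sub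
      · apply Filter.Tendsto.add_const
        have h1 : Filter.Tendsto (fun m : ℕ => Stirling.stirlingSeq (n + 2 + m)) Filter.atTop
            (nhds (Real.sqrt Real.pi)) := by
          have := Stirling.tendsto_stirlingSeq_sqrt_pi.comp (Filter.tendsto_add_atTop_nat (n + 2))
          convert this using 2 with m
          simp [Function.comp]
          ring_nf
        have hπ : Real.sqrt Real.pi ≠ 0 := by positivity
        exact ((Real.continuousAt_log hπ).tendsto.comp h1)
      · have hb : Filter.Tendsto (fun m : ℕ => (4 * ((n : ℝ) + 1 + m))) Filter.atTop
            Filter.atTop := by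
          apply Filter.Tendsto.const_mul_atTop (by norm_num : (0:ℝ) < 4)
          apply Filter.tendsto_atTop_add_const_left
          exact tendsto_natCast_atTop_atTop
        have h2 := hb.inv_tendsto_atTop
        have : (fun m : ℕ => 1 / (4 * ((n : ℝ) + 1 + m))) =
            (fun m : ℕ => (4 * ((n : ℝ) + 1 + m))⁻¹) := by
          funext m; rw [one_div]
        rw [this]
        exact h2
    have hbound : ∀ m : ℕ, Real.log (Stirling.stirlingSeq (n + 2)) ≤
        Real.log (Stirling.stirlingSeq (n + 2 + m)) + 1 / (4 * ((n : ℝ) + 1))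
          - 1 / (4 * ((n : ℝ) + 1 + m)) := by
      intro m
      have := log_stirling_telescope n m
      linarith
    have := ge_of_tendsto' htends hbound
    linarith
  calc Stirling.stirlingSeq (n + 2)
      = Real.exp (Real.log (Stirling.stirlingSeq (n + 2))) := (Real.exp_log hpos).symm
    _ ≤ Real.exp (Real.log (Real.sqrt Real.pi) + 1 / (4 * ((n : ℝ) + 1))) :=
        Real.exp_le_exp.mpr hlog
    _ = Real.sqrt Real.pi * Real.exp (1 / (4 * ((n : ℝ) + 1))) := by
        rw [Real.exp_add, Real.exp_log (by positivity)]


lemma A_upper (R : ℕ) (hR : 2 ≤ R) :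
    tR R R ≤ Real.exp R / Real.sqrt (2 * Real.pi * R) := by
  have hRpos : (0:ℝ) < R := by exact_mod_cast Nat.lt_of_lt_of_le (by norm_num) hR
  have hfac : (0:ℝ) < (R.factorial : ℝ) := by exact_mod_cast R.factorial_pos
  have hs : Real.sqrt Real.pi ≤ Stirling.stirlingSeq R := by
    have := sqrt_pi_le_stirlingSeq (R - 1)
    rwa [Nat.sub_add_cancel (by omega)] at this
  have hsqrtpos : (0:ℝ) < Real.sqrt (2 * (R:ℝ)) := by positivity
  have hA_eq : tR R R = Real.exp R / (Stirling.stirlingSeq R * Real.sqrt (2 * (R:ℝ))) := by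
    rw [Stirling.stirlingSeq, tR]
    rw [div_pow, ← Real.exp_one_pow]
    field_simp
  have hsplit : Real.sqrt (2 * Real.pi * (R:ℝ)) = Real.sqrt Real.pi * Real.sqrt (2 * (R:ℝ)) := by
    rw [← Real.sqrt_mul Real.pi_pos.le]
    ring_nf
  rw [hA_eq, hsplit]
  apply div_le_div_of_nonneg_left (Real.exp_pos _).le (by positivity)
  have hpi : (0:ℝ) < Real.sqrt Real.pi := by positivity
  exact mul_le_mul_of_nonneg_right hs hsqrtpos.le

lemma A_lower (R : ℕ) (hR : 2 ≤ R) :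
    Real.exp R / Real.sqrt (2 * Real.pi * R) * Real.exp (-(1 / (2 * (R:ℝ)))) ≤ tR R R := by
  have hRpos : (0:ℝ) < R := by exact_mod_cast Nat.lt_of_lt_of_le (by norm_num) hR
  have hfac : (0:ℝ) < (R.factorial : ℝ) := by exact_mod_cast R.factorial_pos
  have hsqrtpos : (0:ℝ) < Real.sqrt (2 * (R:ℝ)) := by positivity
  have hpi : (0:ℝ) < Real.sqrt Real.pi := by positivity
  have hspos : 0 < Stirling.stirlingSeq R := by
    have := Stirling.stirlingSeq'_pos (R - 1)
    rwa [Nat.sub_add_cancel (by omega)] at this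
  have hs : Stirling.stirlingSeq R ≤ Real.sqrt Real.pi * Real.exp (1 / (2 * (R:ℝ))) := by
    have h1 := stirlingSeq_le (R - 2)
    rw [show R - 2 + 2 = R by omega] at h1
    have hcast : ((R - 2 : ℕ) : ℝ) + 1 = (R:ℝ) - 1 := by
      have : ((R - 2 : ℕ) : ℝ) = (R:ℝ) - 2 := by
        push_cast [Nat.cast_sub hR]; ring
      rw [this]; ring
    rw [hcast] at h1
    refine h1.trans (mul_le_mul_of_nonneg_left (Real.exp_le_exp.mpr ?_) hpi.le)
    rw [div_le_div_iff₀ (by nlinarith) (by positivity)]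
    nlinarith
  have hA_eq : tR R R = Real.exp R / (Stirling.stirlingSeq R * Real.sqrt (2 * (R:ℝ))) := by
    rw [Stirling.stirlingSeq, tR]
    rw [div_pow, ← Real.exp_one_pow]
    field_simp
  have hsplit : Real.sqrt (2 * Real.pi * (R:ℝ)) = Real.sqrt Real.pi * Real.sqrt (2 * (R:ℝ)) := by
    rw [← Real.sqrt_mul Real.pi_pos.le]
    ring_nf
  rw [hA_eq, hsplit]
  rw [div_mul_eq_mul_div, div_le_div_iff₀ (by positivity) (by positivity)]
  have h2 : Stirling.stirlingSeq R * Real.sqrt (2*(R:ℝ)) ≤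
      Real.sqrt Real.pi * Real.exp (1/(2*(R:ℝ))) * Real.sqrt (2*(R:ℝ)) :=
    mul_le_mul_of_nonneg_right hs hsqrtpos.le
  calc Real.exp (R:ℝ) * Real.exp (-(1/(2*(R:ℝ)))) * (Stirling.stirlingSeq R * Real.sqrt (2*(R:ℝ)))
      ≤ Real.exp (R:ℝ) * Real.exp (-(1/(2*(R:ℝ)))) *
        (Real.sqrt Real.pi * Real.exp (1/(2*(R:ℝ))) * Real.sqrt (2*(R:ℝ))) := by
        apply mul_le_mul_of_nonneg_left h2 (by positivity)
    _ = Real.exp (R:ℝ) * (Real.sqrt Real.pi * Real.sqrt (2*(R:ℝ))) := by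
        rw [show Real.exp (R:ℝ) * Real.exp (-(1/(2*(R:ℝ)))) *
          (Real.sqrt Real.pi * Real.exp (1/(2*(R:ℝ))) * Real.sqrt (2*(R:ℝ)))
          = Real.exp (R:ℝ) * (Real.exp (-(1/(2*(R:ℝ)))) * Real.exp (1/(2*(R:ℝ)))) *
            (Real.sqrt Real.pi * Real.sqrt (2*(R:ℝ))) by ring, ← Real.exp_add]
        simp

lemma tR_plus_ge (R : ℕ) (hR : 0 < R) : ∀ k : ℕ,
    tR R R * Real.exp (-(((k:ℝ) ^ 2 + k) / (2 * (R:ℝ)))) ≤ tR R (R + k) := by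
  have hRpos : (0:ℝ) < (R:ℝ) := by exact_mod_cast hR
  intro k
  induction k with
  | zero => simp
  | succ k ih =>
    have hfac : Real.exp (-(((k:ℝ) + 1) / (R:ℝ))) ≤ (R:ℝ) / ((R:ℝ) + (k:ℝ) + 1) := by
      have h1 : 1 + ((k:ℝ) + 1) / (R:ℝ) ≤ Real.exp (((k:ℝ) + 1) / R) := by
        have := Real.add_one_le_exp (((k:ℝ) + 1) / R); linarith
      have h2 : (R:ℝ) / ((R:ℝ) + (k:ℝ) + 1) = (1 + ((k:ℝ) + 1) / (R:ℝ))⁻¹ := by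
        rw [inv_eq_one_div, div_eq_div_iff (by positivity) (by positivity)]
        field_simp
        ring
      rw [Real.exp_neg, h2]
      exact inv_anti₀ (by positivity) h1
    have step : tR R (R + (k + 1)) = tR R (R + k) * ((R:ℝ) / ((R:ℝ) + (k:ℝ) + 1)) := by
      have h := tR_succ R (R + k)
      rw [show R + (k+1) = (R + k) + 1 from rfl, h]
      push_cast; ring_nf
    rw [step]
    have hmul := mul_le_mul ih hfac (Real.exp_pos _).le (tR_pos R (R + k) hR).le
    refine le_trans (le_of_eq ?_) hmul
    rw [mul_assoc, ← Real.exp_add]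
    congr 1
    push_cast
    field_simp
    ring

lemma tR_plus_le (R : ℕ) (hR : 0 < R) : ∀ k : ℕ, 2 * (k:ℝ) ≤ (R:ℝ) →
    tR R (R + k) ≤ tR R R * Real.exp (-(((k:ℝ) ^ 2 + k) / (2 * (R:ℝ))) + 2 * (k:ℝ) ^ 3 / (R:ℝ) ^ 2) := by
  have hRpos : (0:ℝ) < (R:ℝ) := by exact_mod_cast hR
  intro k
  induction k with
  | zero => intro _; simp
  | succ k ih =>
    intro hk
    push_cast at hk
    have hk' : 2 * (k:ℝ) ≤ (R:ℝ) := by linarith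
    have ih' := ih hk'
    set x : ℝ := ((k:ℝ) + 1) / R with hxdef
    have hx0 : 0 ≤ x := by positivity
    have hx2 : x ≤ 1/2 := by
      rw [hxdef, div_le_iff₀ hRpos]; linarith
    have hfac : (R:ℝ) / ((R:ℝ) + (k:ℝ) + 1) ≤ Real.exp (-x + 2 * x ^ 2) := by
      have h2 : (R:ℝ) / ((R:ℝ) + (k:ℝ) + 1) = (1 + x)⁻¹ := by
        rw [hxdef, inv_eq_one_div, div_eq_div_iff (by positivity) (by positivity)]
        field_simp
        ring
      have h3 := exp_le_one_add hx0 hx2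
      rw [h2, show -x + 2*x^2 = -(x - 2*x^2) by ring, Real.exp_neg]
      exact inv_anti₀ (Real.exp_pos _) h3
    have step : tR R (R + (k + 1)) = tR R (R + k) * ((R:ℝ) / ((R:ℝ) + (k:ℝ) + 1)) := by
      have h := tR_succ R (R + k)
      rw [show R + (k+1) = (R + k) + 1 from rfl, h]
      push_cast; ring_nf
    rw [step]
    have hmul := mul_le_mul ih' hfac (by positivity)
      (mul_nonneg (tR_pos R R hR).le (Real.exp_pos _).le)
    refine hmul.trans ?_
    rw [mul_assoc, ← Real.exp_add]
    refine mul_le_mul_of_nonneg_left (Real.exp_le_exp.mpr ?_) (tR_pos R R hR).le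
    push_cast
    have hsub : (-((((k:ℝ)+1) ^ 2 + ((k:ℝ)+1)) / (2 * (R:ℝ))) + 2 * ((k:ℝ)+1) ^ 3 / (R:ℝ) ^ 2)
        - (-(((k:ℝ) ^ 2 + k) / (2 * (R:ℝ))) + 2 * (k:ℝ) ^ 3 / (R:ℝ) ^ 2 + (-x + 2 * x ^ 2))
        = (4 * (k:ℝ) ^ 2 + 2 * k) / (R:ℝ) ^ 2 := by
      rw [hxdef]; field_simp; ring
    have hpos : (0:ℝ) ≤ (4 * (k:ℝ) ^ 2 + 2 * k) / (R:ℝ) ^ 2 := by positivity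
    linarith [hsub, hpos]

lemma tR_minus_le (R : ℕ) (hR : 0 < R) : ∀ k : ℕ, k ≤ R →
    tR R (R - k) ≤ tR R R * Real.exp (-((k:ℝ) ^ 2 - k) / (2 * (R:ℝ))) := by
  have hRpos : (0:ℝ) < (R:ℝ) := by exact_mod_cast hR
  intro k
  induction k with
  | zero => intro _; simp
  | succ k ih =>
    intro hk
    have hk' : k ≤ R := by omega
    have ih' := ih hk'
    have hkR : ((k:ℝ)) < (R:ℝ) := by exact_mod_cast hk
    have step : tR R (R - (k+1)) = tR R (R - k) * (((R:ℝ) - k) / (R:ℝ)) := by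
      have h := tR_succ R (R - (k+1))
      rw [show R - (k+1) + 1 = R - k by omega] at h
      have hcast : ((R - (k+1) : ℕ) : ℝ) + 1 = (R:ℝ) - k := by
        have : ((R - (k+1) : ℕ) : ℝ) = (R:ℝ) - ((k:ℝ) + 1) := by
          push_cast [Nat.cast_sub hk]; ring
        rw [this]; ring
      rw [hcast] at h
      rw [h]
      have hne : (R:ℝ) - k ≠ 0 := by linarith
      field_simp
      try ring
    have hfac : ((R:ℝ) - k) / (R:ℝ) ≤ Real.exp (-((k:ℝ) / (R:ℝ))) := by
      have h1 : ((R:ℝ) - k) / (R:ℝ) = 1 - (k:ℝ)/(R:ℝ) := by field_simp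
      have h2 := Real.add_one_le_exp (-((k:ℝ)/(R:ℝ)))
      rw [h1]; linarith
    rw [step]
    have hmul := mul_le_mul ih' hfac (div_nonneg (by linarith) hRpos.le)
      (mul_nonneg (tR_pos R R hR).le (Real.exp_pos _).le)
    refine hmul.trans (le_of_eq ?_)
    rw [mul_assoc, ← Real.exp_add]
    congr 1
    push_cast
    field_simp
    ring

lemma tR_minus_ge (R : ℕ) (hR : 0 < R) : ∀ k : ℕ, 2 * (k:ℝ) ≤ (R:ℝ) →
    tR R R * Real.exp (-((k:ℝ) ^ 2 - k) / (2 * (R:ℝ)) - 2 * (k:ℝ) ^ 3 / (R:ℝ) ^ 2) ≤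
      tR R (R - k) := by
  have hRpos : (0:ℝ) < (R:ℝ) := by exact_mod_cast hR
  intro k
  induction k with
  | zero => intro _; simp
  | succ k ih =>
    intro hk
    push_cast at hk
    have hk' : 2 * (k:ℝ) ≤ (R:ℝ) := by linarith
    have ih' := ih hk'
    have hkR : (k:ℝ) < (R:ℝ) := by linarith
    have hkRn : k + 1 ≤ R := by
      have h : ((k+1:ℕ):ℝ) ≤ (R:ℝ) := by push_cast; linarith
      exact_mod_cast h
    have step : tR R (R - (k+1)) = tR R (R - k) * (((R:ℝ) - k) / (R:ℝ)) := by
      have h := tR_succ R (R - (k+1))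
      rw [show R - (k+1) + 1 = R - k by omega] at h
      have hcast : ((R - (k+1) : ℕ) : ℝ) + 1 = (R:ℝ) - k := by
        have : ((R - (k+1) : ℕ) : ℝ) = (R:ℝ) - ((k:ℝ) + 1) := by
          push_cast [Nat.cast_sub hkRn]; ring
        rw [this]; ring
      rw [hcast] at h
      rw [h]
      have hne : (R:ℝ) - k ≠ 0 := by linarith
      field_simp
      try ring
    set x : ℝ := (k:ℝ) / R with hxdef
    have hx0 : 0 ≤ x := by positivity
    have hx2 : x ≤ 1/2 := by rw [hxdef, div_le_iff₀ hRpos]; linarith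
    have hfac : Real.exp (-x - 2 * x ^ 2) ≤ ((R:ℝ) - k) / (R:ℝ) := by
      have h1 : ((R:ℝ) - k) / (R:ℝ) = 1 - x := by rw [hxdef]; field_simp
      rw [h1]
      exact exp_le_one_sub hx0 hx2
    rw [step]
    have hmul := mul_le_mul ih' hfac (Real.exp_pos _).le (tR_pos R (R - k) hR).le
    refine le_trans ?_ hmul
    rw [mul_assoc, ← Real.exp_add]
    refine mul_le_mul_of_nonneg_left (Real.exp_le_exp.mpr ?_) (tR_pos R R hR).le
    push_cast
    have hsub : (-((k:ℝ) ^ 2 - k) / (2 * (R:ℝ)) - 2 * (k:ℝ) ^ 3 / (R:ℝ) ^ 2 + (-x - 2 * x ^ 2))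
        - (-(((k:ℝ)+1) ^ 2 - ((k:ℝ)+1)) / (2 * (R:ℝ)) - 2 * ((k:ℝ)+1) ^ 3 / (R:ℝ) ^ 2)
        = (4 * (k:ℝ) ^ 2 + 6 * k + 2) / (R:ℝ) ^ 2 := by
      rw [hxdef]; field_simp; ring
    have hpos : (0:ℝ) ≤ (4 * (k:ℝ) ^ 2 + 6 * k + 2) / (R:ℝ) ^ 2 := by positivity
    linarith [hsub, hpos]

lemma tail_low (R m : ℕ) (hR : 0 < R) (hm : (m:ℝ) < (R:ℝ)) :
    ∑ n ∈ Finset.range (m+1), tR R n ≤ tR R m * ((R:ℝ) / ((R:ℝ) - m)) := by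
  have hRpos : (0:ℝ) < (R:ℝ) := by exact_mod_cast hR
  have key : ∀ d, d ≤ m → tR R (m - d) ≤ tR R m * ((m:ℝ)/(R:ℝ)) ^ d := by
    intro d
    induction d with
    | zero => intro _; simp
    | succ d ih =>
      intro hd
      have hd' : d ≤ m := by omega
      have ih' := ih hd'
      have hmd : 1 ≤ m - d := by omega
      have step : tR R (m - (d+1)) = tR R (m - d) * ((((m - d : ℕ)):ℝ) / (R:ℝ)) := by
        have h := tR_succ R (m - (d+1))
        rw [show m - (d+1) + 1 = m - d by omega] at h
        have hcast : ((m - (d+1) : ℕ) : ℝ) + 1 = ((m - d : ℕ) : ℝ) := by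
          push_cast [Nat.cast_sub (by omega : d + 1 ≤ m), Nat.cast_sub hd']
          ring
        rw [hcast] at h
        have hne : ((m - d : ℕ) : ℝ) ≠ 0 := by
          have : (0:ℝ) < ((m - d : ℕ) : ℝ) := by exact_mod_cast hmd
          linarith
        have hcancel : ((R:ℝ) / ((m - d : ℕ) : ℝ)) * (((m - d : ℕ) : ℝ) / (R:ℝ)) = 1 := by
          rw [div_mul_div_comm, mul_comm ((R:ℝ)) (((m - d : ℕ) : ℝ))]
          exact div_self (mul_ne_zero hne hRpos.ne')
        rw [h, mul_assoc, hcancel, mul_one]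
      rw [step]
      have hfac : (((m - d : ℕ)):ℝ) / (R:ℝ) ≤ (m:ℝ)/(R:ℝ) := by
        gcongr
        exact_mod_cast Nat.sub_le m d
      have hmm := mul_le_mul ih' hfac (by positivity)
        (mul_nonneg (tR_pos R m hR).le (pow_nonneg (by positivity) d))
      refine hmm.trans (le_of_eq ?_)
      ring
  have hq0 : (0:ℝ) ≤ (m:ℝ)/(R:ℝ) := by positivity
  have hq1 : (m:ℝ)/(R:ℝ) < 1 := by rw [div_lt_one hRpos]; exact hm
  have hrefl : ∑ n ∈ Finset.range (m+1), tR R n = ∑ d ∈ Finset.range (m+1), tR R (m - d) := by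
    rw [← Finset.sum_range_reflect]
    apply Finset.sum_congr rfl
    intro j hj
    have hidx : m + 1 - 1 - j = m - j := by omega
    rw [hidx]
  rw [hrefl]
  calc ∑ d ∈ Finset.range (m+1), tR R (m - d)
      ≤ ∑ d ∈ Finset.range (m+1), tR R m * ((m:ℝ)/(R:ℝ)) ^ d := by
        apply Finset.sum_le_sum
        intro d hd
        exact key d (by
          have := Finset.mem_range.mp hd
          omega)
    _ = tR R m * ∑ d ∈ Finset.range (m+1), ((m:ℝ)/(R:ℝ)) ^ d := by rw [Finset.mul_sum]
    _ ≤ tR R m * (1 / (1 - (m:ℝ)/(R:ℝ))) := by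
        apply mul_le_mul_of_nonneg_left (geom_sum_le_inv hq0 hq1 _) (tR_pos R m hR).le
    _ = tR R m * ((R:ℝ) / ((R:ℝ) - m)) := by
        congr 1
        rw [div_eq_div_iff (ne_of_gt (by linarith : (0:ℝ) < 1 - (m:ℝ)/(R:ℝ))) (ne_of_gt (by linarith : (0:ℝ) < (R:ℝ) - (m:ℝ)))]
        field_simp
        try ring

lemma tail_high_key (R K : ℕ) (hR : 0 < R) (hK : (R:ℝ) < (K:ℝ)) :
    ∀ j : ℕ, tR R (K + j) ≤ tR R K * ((R:ℝ)/(K:ℝ)) ^ j := by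
  have hRpos : (0:ℝ) < (R:ℝ) := by exact_mod_cast hR
  have hKpos : (0:ℝ) < (K:ℝ) := lt_trans hRpos hK
  intro j
  induction j with
  | zero => simp
  | succ j ih =>
    have step : tR R (K + (j+1)) = tR R (K + j) * ((R:ℝ) / ((K:ℝ) + (j:ℝ) + 1)) := by
      have h := tR_succ R (K + j)
      rw [show K + (j+1) = (K + j) + 1 from rfl, h]
      push_cast; ring_nf
    rw [step]
    have hfac : (R:ℝ) / ((K:ℝ) + (j:ℝ) + 1) ≤ (R:ℝ)/(K:ℝ) := by
      rw [div_le_div_iff₀ (by positivity) hKpos]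
      nlinarith [Nat.cast_nonneg (α := ℝ) j]
    have hmm := mul_le_mul ih hfac (by positivity)
      (mul_nonneg (tR_pos R K hR).le (pow_nonneg (by positivity) j))
    refine hmm.trans (le_of_eq ?_)
    ring

lemma tail_high (R K : ℕ) (hR : 0 < R) (hK : (R:ℝ) < (K:ℝ)) :
    Summable (fun j : ℕ => tR R (K + j)) ∧
    ∑' j : ℕ, tR R (K + j) ≤ tR R K * ((K:ℝ) / ((K:ℝ) - R)) := by
  have hRpos : (0:ℝ) < (R:ℝ) := by exact_mod_cast hR
  have hKpos : (0:ℝ) < (K:ℝ) := lt_trans hRpos hK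
  have key := tail_high_key R K hR hK
  have hq0 : (0:ℝ) ≤ (R:ℝ)/(K:ℝ) := by positivity
  have hq1 : (R:ℝ)/(K:ℝ) < 1 := by rw [div_lt_one hKpos]; exact hK
  have hsum_geo : Summable (fun j : ℕ => tR R K * ((R:ℝ)/(K:ℝ)) ^ j) :=
    (summable_geometric_of_lt_one hq0 hq1).mul_left _
  have hsum : Summable (fun j : ℕ => tR R (K + j)) :=
    Summable.of_nonneg_of_le (fun j => (tR_pos R (K + j) hR).le) key hsum_geo
  refine ⟨hsum, ?_⟩
  calc ∑' j : ℕ, tR R (K + j) ≤ ∑' j : ℕ, tR R K * ((R:ℝ)/(K:ℝ)) ^ j :=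
        Summable.tsum_le_tsum key hsum hsum_geo
    _ = tR R K * (1 - (R:ℝ)/(K:ℝ))⁻¹ := by
        rw [tsum_mul_left, tsum_geometric_of_lt_one hq0 hq1]
    _ = tR R K * ((K:ℝ) / ((K:ℝ) - R)) := by
        congr 1
        rw [inv_eq_one_div, div_eq_div_iff (ne_of_gt (by linarith : (0:ℝ) < 1 - (R:ℝ)/(K:ℝ))) (ne_of_gt (by linarith : (0:ℝ) < (K:ℝ) - (R:ℝ)))]
        field_simp
        try ring

end Lem3

noncomputable def Fxi (ξ : ℕ → ℂ) (z : ℂ) : ℂ := ∑' n : ℕ, ξ n * z ^ n / (Nat.factorial n)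

noncomputable def W (ξ : ℕ → ℂ) (R : ℕ) (θ : ℝ) : ℂ :=
  ∑ n ∈ Finset.Icc (-(⌊Real.sqrt R * Real.log R⌋ : ℤ)) ⌊Real.sqrt R * Real.log R⌋,
    ξ (n + R).toNat * e (n * θ) * Real.exp (-(n : ℝ) ^ 2 / (2 * R))

namespace Lem3

lemma log_le_rt8 (x : ℝ) (hx : 0 < x) :
    Real.log x ≤ 8 * Real.sqrt (Real.sqrt (Real.sqrt x)) := by
  have h1 : Real.log (Real.sqrt x) = Real.log x / 2 := Real.log_sqrt hx.le
  have h2 : Real.log (Real.sqrt (Real.sqrt x)) = Real.log (Real.sqrt x) / 2 :=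
    Real.log_sqrt (Real.sqrt_nonneg x)
  have h3 : Real.log (Real.sqrt (Real.sqrt (Real.sqrt x))) =
      Real.log (Real.sqrt (Real.sqrt x)) / 2 := Real.log_sqrt (Real.sqrt_nonneg _)
  have h4 : Real.log (Real.sqrt (Real.sqrt (Real.sqrt x))) ≤
      Real.sqrt (Real.sqrt (Real.sqrt x)) := by
    have hp : 0 < Real.sqrt (Real.sqrt (Real.sqrt x)) := by positivity
    linarith [Real.log_le_sub_one_of_pos hp]
  linarith


lemma abs_block {t μ E D : ℝ} (hμ : 0 < μ) (hE0 : 0 < E) (hE1 : E ≤ 1) (hD : 0 ≤ D)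
    (h1 : t ≤ μ * (E * Real.exp D)) (h2 : μ * (E * Real.exp (-D)) ≤ t) :
    |t - μ * E| ≤ μ * (Real.exp D - 1) := by
  have hsum2 : 2 ≤ Real.exp D + Real.exp (-D) := by
    linarith [Real.add_one_le_exp D, Real.add_one_le_exp (-D)]
  have hexpD1 : 1 ≤ Real.exp D := by linarith [Real.add_one_le_exp D]
  have hEneg : Real.exp (-D) ≤ 1 := by
    have h := Real.exp_le_exp.mpr (neg_nonpos.mpr hD)
    rwa [Real.exp_zero] at h
  rw [abs_sub_le_iff]
  constructor
  · nlinarith [mul_nonneg (mul_nonneg hμ.le (sub_nonneg.mpr hexpD1)) (sub_nonneg.mpr hE1)]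
  · nlinarith [mul_nonneg (mul_nonneg hμ.le (sub_nonneg.mpr hE1))
      (by linarith : (0:ℝ) ≤ 1 - Real.exp (-D)),
      mul_nonneg hμ.le (by linarith : (0:ℝ) ≤ (Real.exp D + Real.exp (-D)) - 2)]

set_option maxRecDepth 20000 in
set_option maxHeartbeats 4000000 in
theorem stmt_3' (ξ : ℕ → ℂ) (M : ℝ) (hbdd : ∀ n, ‖ξ n‖ ≤ M) (ε : ℝ) (hε : 0 < ε) :
    ∃ C : ℝ, ∀ R : ℕ, 2 ≤ R → ∀ θ : ℝ,
      ‖Fxi ξ ((R : ℂ) * e θ)‖ ≥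
        Real.exp R / Real.sqrt (2 * Real.pi * R) * (‖W ξ R θ‖ - C * (R : ℝ) ^ ε) := by
  classical
  have hM0 : 0 ≤ M := le_trans (norm_nonneg _) (hbdd 0)
  refine ⟨M * (200 * (4/ε)^4 + 5 * 2^112), ?_⟩
  intro R hR2 θ
  set c : ℝ := 200 * (4/ε)^4 + 5 * 2^112 with hc
  have hcpos : 0 < c := by rw [hc]; positivity
  have hR0 : 0 < R := by omega
  have hRpos : (0:ℝ) < R := by exact_mod_cast hR0
  have hR1 : (1:ℝ) ≤ R := by exact_mod_cast hR0
  have hR2' : (2:ℝ) ≤ R := by exact_mod_cast hR2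
  set L : ℝ := Real.sqrt R * Real.log R with hLdef
  have hlogR0 : 0 ≤ Real.log R := Real.log_nonneg hR1
  have hsq0 : 0 < Real.sqrt R := Real.sqrt_pos.mpr hRpos
  have hsq2 : Real.sqrt R * Real.sqrt R = (R:ℝ) := Real.mul_self_sqrt hRpos.le
  have hL0 : 0 ≤ L := mul_nonneg hsq0.le hlogR0
  have hNf0 : 0 ≤ ⌊L⌋ := Int.le_floor.mpr (by exact_mod_cast hL0)
  set N : ℕ := ⌊L⌋.toNat with hNdef
  have hNfN : ((⌊L⌋ : ℤ) : ℝ) = (N:ℝ) := by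
    rw [hNdef]; exact_mod_cast (Int.toNat_of_nonneg hNf0).symm
  have hNle : (N:ℝ) ≤ L := by rw [← hNfN]; exact Int.floor_le L
  have hNgt : L < (N:ℝ) + 1 := by rw [← hNfN]; exact Int.lt_floor_add_one L
  set μ : ℝ := Real.exp R / Real.sqrt (2*Real.pi*R) with hμdef
  have hμpos : 0 < μ := by rw [hμdef]; positivity
  have hRε1 : (1:ℝ) ≤ (R:ℝ) ^ ε := Real.one_le_rpow hR1 hε.le
  have hlog2s : Real.log R ≤ 2 * Real.sqrt R := by
    have := Real.log_le_sub_one_of_pos hsq0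
    have h1 : Real.log R = 2 * Real.log (Real.sqrt R) := by
      rw [Real.log_sqrt hRpos.le]; ring
    linarith
  -- bound on ‖W‖
  have hWle : ‖W ξ R θ‖ ≤ (2*(N:ℝ)+1) * M := by
    unfold W
    rw [← hLdef]
    refine le_trans (norm_sum_le _ _) ?_
    refine le_trans (Finset.sum_le_card_nsmul _ _ M ?_) ?_
    · intro x _
      rw [norm_mul, norm_mul, e_norm, Complex.norm_real, Real.norm_eq_abs, Real.abs_exp,
        mul_one]
      have hexp1 : Real.exp (-(x:ℝ)^2/(2*(R:ℝ))) ≤ 1 := by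
        have h := div_nonneg (sq_nonneg (x:ℝ)) (by positivity : (0:ℝ) ≤ 2*(R:ℝ))
        rw [neg_div, ← Real.exp_zero]
        exact Real.exp_le_exp.mpr (neg_nonpos.mpr h)
      nlinarith only [hbdd (x + R).toNat, hexp1, norm_nonneg (ξ (x + R).toNat), Real.exp_pos (-(x:ℝ)^2/(2*(R:ℝ)))]
    · rw [nsmul_eq_mul]
      apply mul_le_mul_of_nonneg_right ?_ hM0
      rw [Int.card_Icc]
      have h0 : (0:ℤ) ≤ ⌊L⌋ + 1 - -⌊L⌋ := by omega
      have hti : ((⌊L⌋ + 1 - -⌊L⌋).toNat : ℤ) = ⌊L⌋ + 1 - -⌊L⌋ := Int.toNat_of_nonneg h0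
      have hcard : (((⌊L⌋ + 1 - -⌊L⌋).toNat : ℕ) : ℝ) = 2*(N:ℝ)+1 := by
        have h1 : (((⌊L⌋ + 1 - -⌊L⌋).toNat : ℕ) : ℝ) = (((⌊L⌋ + 1 - -⌊L⌋ : ℤ)) : ℝ) := by
          exact_mod_cast congrArg (Int.cast : ℤ → ℝ) hti
        rw [h1]
        push_cast
        rw [hNfN]
        ring
      rw [hcard]

  -- easy case : R small
  by_cases hbig : 2^112 ≤ R
  case neg =>
    push_neg at hbig
    have hRle : (R:ℝ) ≤ 2^112 := by exact_mod_cast hbig.le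
    have hWc : ‖W ξ R θ‖ ≤ M * c := by
      have hL2R : L ≤ 2 * R := by
        calc L = Real.sqrt R * Real.log R := hLdef
          _ ≤ Real.sqrt R * (2 * Real.sqrt R) := by
              apply mul_le_mul_of_nonneg_left hlog2s hsq0.le
          _ = 2 * (Real.sqrt R * Real.sqrt R) := by ring
          _ = 2 * (R:ℝ) := by rw [hsq2]
      have h5R : 2*(N:ℝ)+1 ≤ 5 * (R:ℝ) := by
        have : (N:ℝ) ≤ 2*R := le_trans hNle hL2R
        linarith
      calc ‖W ξ R θ‖ ≤ (2*(N:ℝ)+1) * M := hWle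
        _ ≤ 5 * (R:ℝ) * M := by apply mul_le_mul_of_nonneg_right h5R hM0
        _ ≤ 5 * 2^112 * M := by
            apply mul_le_mul_of_nonneg_right ?_ hM0
            linarith
        _ = M * (5 * 2^112) := by ring
        _ ≤ M * c := by
            apply mul_le_mul_of_nonneg_left ?_ hM0
            rw [hc]
            have h0 : (0:ℝ) ≤ 200 * (4/ε)^4 := by positivity
            linarith
    have hfin : ‖W ξ R θ‖ - M * c * (R:ℝ)^ε ≤ 0 := by
      have : M * c ≤ M * c * (R:ℝ)^ε := le_mul_of_one_le_right (by positivity) hRε1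
      linarith
    calc Real.exp R / Real.sqrt (2*Real.pi*R) * (‖W ξ R θ‖ - M * c * (R:ℝ)^ε)
        ≤ 0 := mul_nonpos_of_nonneg_of_nonpos hμpos.le hfin
      _ ≤ ‖Fxi ξ ((R:ℂ) * e θ)‖ := norm_nonneg _
  case pos =>
  -- ===== numeric facts =====
  have hRge : ((2:ℝ)^112) ≤ (R:ℝ) := by exact_mod_cast hbig
  set r : ℝ := Real.sqrt (Real.sqrt (Real.sqrt R)) with hrdef
  have hr0 : 0 < r := by rw [hrdef]; positivity
  have hs56 : (2:ℝ)^56 ≤ Real.sqrt R := by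
    have h1 : Real.sqrt ((2:ℝ)^112) = 2^56 := by
      rw [show ((2:ℝ)^112) = ((2:ℝ)^56)^2 by norm_num [← pow_mul]]
      exact Real.sqrt_sq (by positivity)
    rw [← h1]; exact Real.sqrt_le_sqrt hRge
  have hs28 : (2:ℝ)^28 ≤ Real.sqrt (Real.sqrt R) := by
    have h1 : Real.sqrt ((2:ℝ)^56) = 2^28 := by
      rw [show ((2:ℝ)^56) = ((2:ℝ)^28)^2 by norm_num [← pow_mul]]
      exact Real.sqrt_sq (by positivity)
    rw [← h1]; exact Real.sqrt_le_sqrt hs56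
  have hr14 : (2:ℝ)^14 ≤ r := by
    have h1 : Real.sqrt ((2:ℝ)^28) = 2^14 := by
      rw [show ((2:ℝ)^28) = ((2:ℝ)^14)^2 by norm_num [← pow_mul]]
      exact Real.sqrt_sq (by positivity)
    rw [hrdef, ← h1]; exact Real.sqrt_le_sqrt hs28
  have hr2 : r^2 = Real.sqrt (Real.sqrt R) := by rw [hrdef]; exact Real.sq_sqrt (Real.sqrt_nonneg _)
  have hr4 : r^4 = Real.sqrt R := by
    rw [show r^4 = (r^2)^2 by ring, hr2]; exact Real.sq_sqrt (Real.sqrt_nonneg _)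
  have hs2' : (Real.sqrt R)^2 = (R:ℝ) := Real.sq_sqrt hRpos.le
  have hlog8r : Real.log R ≤ 8 * r := by rw [hrdef]; exact log_le_rt8 R hRpos
  have hlog6 : 6 ≤ Real.log R := by
    rw [Real.le_log_iff_exp_le hRpos]
    have h1 : Real.exp 1 ^ 6 = Real.exp 6 := by
      rw [Real.exp_one_pow]; norm_num
    have h2 : Real.exp 1 ^ 6 ≤ 3^6 :=
      pow_le_pow_left₀ (Real.exp_pos 1).le
        (le_of_lt (lt_trans Real.exp_one_lt_d9 (by norm_num))) 6
    have h3 : (3:ℝ)^6 ≤ (R:ℝ) := le_trans (by norm_num) hRge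
    linarith [h1 ▸ h2]
  have hlog1 : 1 ≤ Real.log R := by linarith
  have hlog3 : (Real.log R)^3 ≤ Real.sqrt R / 32 := by
    have h1 : (Real.log R)^3 ≤ (8*r)^3 := pow_le_pow_left₀ hlogR0 hlog8r 3
    have h3 : 512 * r^3 ≤ r^4 / 32 := by nlinarith only [hr14, hr0, pow_pos hr0 3]
    rw [← hr4]
    nlinarith only [h1, h3]
  have hloghalf : Real.log R ≤ Real.sqrt R / 32 := by
    nlinarith only [hlog3, hlog1, mul_nonneg (mul_nonneg (sub_nonneg.mpr hlog1) hlogR0) hlogR0,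
      mul_nonneg (sub_nonneg.mpr hlog1) hlogR0]
  have hLR32 : L ≤ (R:ℝ)/32 := by
    calc L = Real.sqrt R * Real.log R := hLdef
      _ ≤ Real.sqrt R * (Real.sqrt R / 32) := mul_le_mul_of_nonneg_left hloghalf hsq0.le
      _ = (Real.sqrt R * Real.sqrt R) / 32 := by ring
      _ = (R:ℝ)/32 := by rw [hsq2]
  have hR32 : (32:ℝ) ≤ (R:ℝ) := le_trans (by norm_num) hRge
  have hN1 : (N:ℝ) + 1 ≤ (R:ℝ)/16 := by
    have h1 : (1:ℝ) ≤ (R:ℝ)/32 := by linarith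
    linarith [hNle, hLR32]
  have hNhalf : 2*((N:ℝ)+1) ≤ (R:ℝ) := by linarith
  have hN1R : N + 1 ≤ R := by
    have h : ((N+1:ℕ):ℝ) ≤ (R:ℝ) := by push_cast; linarith
    exact_mod_cast h
  have hNleR : N ≤ R := by omega
  have hs1 : 1 ≤ Real.sqrt R := by nlinarith only [hsq2, hR1, hsq0]
  have hL1 : 1 ≤ L := by
    rw [hLdef]; nlinarith only [hlog1, hs1]
  have h2N3L : 2*(N:ℝ)+1 ≤ 3*L := by linarith
  have hL2 : L^2 = (R:ℝ) * (Real.log R)^2 := by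
    have h : L^2 = (Real.sqrt R)^2 * (Real.log R)^2 := by rw [hLdef]; ring
    rw [h, hs2']
  have hL4 : L^4 = (R:ℝ)^2 * (Real.log R)^4 := by
    have h : L^4 = (L^2)^2 := by ring
    rw [h, hL2]; ring
  have hlog4_1296 : (1296:ℝ) ≤ (Real.log R)^4 := by
    nlinarith only [hlog6, sq_nonneg (Real.log (R:ℝ) - 6), sq_nonneg ((Real.log (R:ℝ))^2 - 36)]
  -- ===== Delta =====
  set Δ : ℝ := 1/(2*(R:ℝ)) + ((N:ℝ)+1)/(2*(R:ℝ)) + 2*((N:ℝ)+1)^3/(R:ℝ)^2 with hΔdef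
  have hΔpos : 0 < Δ := by rw [hΔdef]; positivity
  have hN1L : (N:ℝ)+1 ≤ 2*L := by linarith
  have hcube : ((N:ℝ)+1)^3 ≤ 8*L^3 := by
    have h := pow_le_pow_left₀ (by positivity : (0:ℝ) ≤ (N:ℝ)+1) hN1L 3
    nlinarith only [h]
  have hL3R : L^3 ≤ (R:ℝ)^2/32 := by
    have h1 : L^3 = (Real.sqrt R)^3 * (Real.log R)^3 := by rw [hLdef]; ring
    have h2 : (Real.sqrt R)^3 * (Real.log R)^3 ≤ (Real.sqrt R)^3 * (Real.sqrt R / 32) :=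
      mul_le_mul_of_nonneg_left hlog3 (by positivity)
    have h3 : (Real.sqrt R)^3 * (Real.sqrt R / 32) = ((Real.sqrt R)^2)^2/32 := by ring
    have h4 : ((Real.sqrt R)^2)^2 = (R:ℝ)^2 := by rw [hs2']
    rw [h1]
    rw [h3, h4] at h2
    exact h2
  have ht3 : 2*((N:ℝ)+1)^3/(R:ℝ)^2 ≤ 1/2 := by
    have h1 : 2*((N:ℝ)+1)^3 ≤ 16*L^3 := by linarith
    have h2 : (16:ℝ)*L^3 ≤ (R:ℝ)^2/2 := by linarith
    rw [div_le_iff₀ (by positivity)]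
    linarith
  have hΔ1 : Δ ≤ 1 := by
    have t1 : 1/(2*(R:ℝ)) ≤ 1/4 := by
      rw [div_le_div_iff₀ (by positivity) (by norm_num)]; linarith
    have t2 : ((N:ℝ)+1)/(2*(R:ℝ)) ≤ 1/4 := by
      rw [div_le_iff₀ (by positivity)]; linarith
    rw [hΔdef]; linarith
  have hexpΔ3 : Real.exp Δ ≤ 3 := by
    calc Real.exp Δ ≤ Real.exp 1 := Real.exp_le_exp.mpr hΔ1
      _ ≤ 3 := by linarith [Real.exp_one_lt_d9]
  have hexpΔ1 : 1 ≤ Real.exp Δ := by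
    rw [← Real.exp_zero]; exact Real.exp_le_exp.mpr hΔpos.le
  have hper : Real.exp Δ - 1 ≤ 3*Δ := by
    have h1 := Real.add_one_le_exp (-Δ)
    have h4 : Real.exp (-Δ) * Real.exp Δ = 1 := by rw [← Real.exp_add]; simp
    nlinarith only [h1, h4, hexpΔ3, hΔpos, Real.exp_pos Δ, Real.exp_pos (-Δ)]
  -- ===== Stirling =====
  have hA_up : tR R R ≤ μ := by rw [hμdef]; exact A_upper R hR2
  have hA_lo : μ * Real.exp (-(1/(2*(R:ℝ)))) ≤ tR R R := by rw [hμdef]; exact A_lower R hR2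
  -- ===== per-term block bound =====
  have hblock : ∀ m ∈ Finset.Ico (R - N) (R + N + 1),
      |tR R m - μ * Real.exp (-((m:ℝ) - R)^2 / (2*(R:ℝ)))| ≤ μ * (Real.exp Δ - 1) := by
    intro m hm
    obtain ⟨hm1, hm2⟩ := Finset.mem_Ico.mp hm
    rcases le_or_gt R m with hRm | hmR
    · -- m = R + k
      obtain ⟨k, rfl⟩ : ∃ k, m = R + k := ⟨m - R, by omega⟩
      have hkN : k ≤ N := by omega
      have hkN' : (k:ℝ) ≤ (N:ℝ) := by exact_mod_cast hkN
      have hk0' : (0:ℝ) ≤ (k:ℝ) := Nat.cast_nonneg k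
      have hkcast : ((R + k : ℕ):ℝ) - (R:ℝ) = (k:ℝ) := by push_cast; ring
      rw [hkcast]
      have hk2R : 2*(k:ℝ) ≤ (R:ℝ) := by linarith
      have hup := tR_plus_le R hR0 k hk2R
      have hlo := tR_plus_ge R hR0 k
      have hk3 : (k:ℝ)^3 ≤ ((N:ℝ)+1)^3 := pow_le_pow_left₀ hk0' (by linarith) 3
      have h1 : tR R (R + k) ≤ μ * (Real.exp (-(k:ℝ)^2/(2*(R:ℝ))) * Real.exp Δ) := by
        refine hup.trans ?_
        refine (mul_le_mul_of_nonneg_right hA_up (Real.exp_pos _).le).trans ?_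
        rw [← Real.exp_add]
        refine mul_le_mul_of_nonneg_left (Real.exp_le_exp.mpr ?_) hμpos.le
        rw [hΔdef]
        have e1 : -(((k:ℝ)^2 + k) / (2 * (R:ℝ))) + 2 * (k:ℝ) ^ 3 / (R:ℝ) ^ 2
            = (-((k:ℝ)^2) - k) * (1/(2*(R:ℝ))) + (2*(k:ℝ)^3) * (1/(R:ℝ)^2) := by ring
        have e2 : -(k:ℝ)^2/(2*(R:ℝ)) + (1/(2*(R:ℝ)) + ((N:ℝ)+1)/(2*(R:ℝ)) + 2*((N:ℝ)+1)^3/(R:ℝ)^2)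
            = (-((k:ℝ)^2) + 1 + ((N:ℝ)+1)) * (1/(2*(R:ℝ))) + (2*((N:ℝ)+1)^3) * (1/(R:ℝ)^2) := by ring
        rw [e1, e2]
        refine add_le_add
          (mul_le_mul_of_nonneg_right
            (by linarith only [hk0', hkN', Nat.cast_nonneg (α := ℝ) N]) (by positivity))
          (mul_le_mul_of_nonneg_right (by linarith only [hk3]) (by positivity))
      have h2 : μ * (Real.exp (-(k:ℝ)^2/(2*(R:ℝ))) * Real.exp (-Δ)) ≤ tR R (R + k) := by
        refine le_trans ?_ hlo
        have hAlo' : μ * Real.exp (-(1/(2*(R:ℝ)))) * Real.exp (-(((k:ℝ)^2 + k)/(2*(R:ℝ))))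
            ≤ tR R R * Real.exp (-(((k:ℝ)^2 + k)/(2*(R:ℝ)))) :=
          mul_le_mul_of_nonneg_right hA_lo (Real.exp_pos _).le
        refine le_trans ?_ hAlo'
        rw [mul_assoc, ← Real.exp_add, ← Real.exp_add]
        refine mul_le_mul_of_nonneg_left (Real.exp_le_exp.mpr ?_) hμpos.le
        rw [hΔdef]
        have e1 : -(k:ℝ)^2/(2*(R:ℝ)) + -(1/(2*(R:ℝ)) + ((N:ℝ)+1)/(2*(R:ℝ)) + 2*((N:ℝ)+1)^3/(R:ℝ)^2)
            = (-((k:ℝ)^2) - 1 - ((N:ℝ)+1)) * (1/(2*(R:ℝ))) + (-(2*((N:ℝ)+1)^3)) * (1/(R:ℝ)^2) := by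
          ring
        have e2 : -(1/(2*(R:ℝ))) + -(((k:ℝ)^2 + k)/(2*(R:ℝ)))
            = (-((k:ℝ)^2) - k - 1) * (1/(2*(R:ℝ))) + (0:ℝ) * (1/(R:ℝ)^2) := by ring
        rw [e1, e2]
        refine add_le_add
          (mul_le_mul_of_nonneg_right
            (by linarith only [hk0', hkN', Nat.cast_nonneg (α := ℝ) N]) (by positivity))
          (mul_le_mul_of_nonneg_right
            (by linarith only [pow_nonneg (by positivity : (0:ℝ) ≤ (N:ℝ)+1) 3]) (by positivity))
      have hEone : Real.exp (-(k:ℝ)^2/(2*(R:ℝ))) ≤ 1 := by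
        have h := div_nonneg (sq_nonneg (k:ℝ)) (by positivity : (0:ℝ) ≤ 2*(R:ℝ))
        rw [neg_div, ← Real.exp_zero]
        exact Real.exp_le_exp.mpr (neg_nonpos.mpr h)
      exact abs_block hμpos (Real.exp_pos _) hEone hΔpos.le h1 h2
    · -- m = R - k, 1 ≤ k ≤ N
      obtain ⟨k, hmk, hkR⟩ : ∃ k, m = R - k ∧ k ≤ R := ⟨R - m, by omega, by omega⟩
      have hk1 : 1 ≤ k := by omega
      have hkN : k ≤ N := by omega
      have hkN' : (k:ℝ) ≤ (N:ℝ) := by exact_mod_cast hkN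
      have hk0' : (0:ℝ) ≤ (k:ℝ) := Nat.cast_nonneg k
      have hkcast : ((m:ℕ):ℝ) - (R:ℝ) = -(k:ℝ) := by
        rw [hmk]; push_cast [Nat.cast_sub hkR]; ring
      rw [hkcast, neg_sq]
      rw [hmk]
      have hk2R : 2*(k:ℝ) ≤ (R:ℝ) := by linarith
      have hup := tR_minus_le R hR0 k hkR
      have hlo := tR_minus_ge R hR0 k hk2R
      have hk3 : (k:ℝ)^3 ≤ ((N:ℝ)+1)^3 := pow_le_pow_left₀ hk0' (by linarith) 3
      have h1 : tR R (R - k) ≤ μ * (Real.exp (-(k:ℝ)^2/(2*(R:ℝ))) * Real.exp Δ) := by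
        refine hup.trans ?_
        refine (mul_le_mul_of_nonneg_right hA_up (Real.exp_pos _).le).trans ?_
        rw [← Real.exp_add]
        refine mul_le_mul_of_nonneg_left (Real.exp_le_exp.mpr ?_) hμpos.le
        rw [hΔdef]
        have e1 : -((k:ℝ)^2 - k) / (2 * (R:ℝ))
            = (-((k:ℝ)^2) + k) * (1/(2*(R:ℝ))) + (0:ℝ) * (1/(R:ℝ)^2) := by ring
        have e2 : -(k:ℝ)^2/(2*(R:ℝ)) + (1/(2*(R:ℝ)) + ((N:ℝ)+1)/(2*(R:ℝ)) + 2*((N:ℝ)+1)^3/(R:ℝ)^2)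
            = (-((k:ℝ)^2) + 1 + ((N:ℝ)+1)) * (1/(2*(R:ℝ))) + (2*((N:ℝ)+1)^3) * (1/(R:ℝ)^2) := by ring
        rw [e1, e2]
        refine add_le_add
          (mul_le_mul_of_nonneg_right
            (by linarith only [hk0', hkN', Nat.cast_nonneg (α := ℝ) N]) (by positivity))
          (mul_le_mul_of_nonneg_right
            (by linarith only [pow_nonneg (by positivity : (0:ℝ) ≤ (N:ℝ)+1) 3]) (by positivity))
      have h2 : μ * (Real.exp (-(k:ℝ)^2/(2*(R:ℝ))) * Real.exp (-Δ)) ≤ tR R (R - k) := by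
        refine le_trans ?_ hlo
        have hAlo' : μ * Real.exp (-(1/(2*(R:ℝ)))) *
            Real.exp (-((k:ℝ)^2 - k) / (2 * (R:ℝ)) - 2 * (k:ℝ) ^ 3 / (R:ℝ) ^ 2)
            ≤ tR R R * Real.exp (-((k:ℝ)^2 - k) / (2 * (R:ℝ)) - 2 * (k:ℝ) ^ 3 / (R:ℝ) ^ 2) :=
          mul_le_mul_of_nonneg_right hA_lo (Real.exp_pos _).le
        refine le_trans ?_ hAlo'
        rw [mul_assoc, ← Real.exp_add, ← Real.exp_add]
        refine mul_le_mul_of_nonneg_left (Real.exp_le_exp.mpr ?_) hμpos.le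
        rw [hΔdef]
        have e1 : -(k:ℝ)^2/(2*(R:ℝ)) + -(1/(2*(R:ℝ)) + ((N:ℝ)+1)/(2*(R:ℝ)) + 2*((N:ℝ)+1)^3/(R:ℝ)^2)
            = (-((k:ℝ)^2) - 1 - ((N:ℝ)+1)) * (1/(2*(R:ℝ))) + (-(2*((N:ℝ)+1)^3)) * (1/(R:ℝ)^2) := by
          ring
        have e2 : -(1/(2*(R:ℝ))) + (-((k:ℝ)^2 - k) / (2 * (R:ℝ)) - 2 * (k:ℝ) ^ 3 / (R:ℝ) ^ 2)
            = (-((k:ℝ)^2) + k - 1) * (1/(2*(R:ℝ))) + (-(2*(k:ℝ)^3)) * (1/(R:ℝ)^2) := by ring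
        rw [e1, e2]
        refine add_le_add
          (mul_le_mul_of_nonneg_right
            (by linarith only [hk0', hkN', Nat.cast_nonneg (α := ℝ) N]) (by positivity))
          (mul_le_mul_of_nonneg_right (by linarith only [hk3]) (by positivity))
      have hEone : Real.exp (-(k:ℝ)^2/(2*(R:ℝ))) ≤ 1 := by
        have h := div_nonneg (sq_nonneg (k:ℝ)) (by positivity : (0:ℝ) ≤ 2*(R:ℝ))
        rw [neg_div, ← Real.exp_zero]
        exact Real.exp_le_exp.mpr (neg_nonpos.mpr h)
      exact abs_block hμpos (Real.exp_pos _) hEone hΔpos.le h1 h2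
  -- ===== tail exponent fact =====
  have htailexp : -(((N:ℝ)+1)^2 - ((N:ℝ)+1))/(2*(R:ℝ)) ≤ 1 - 3*Real.log R := by
    have hNL : L - 1 ≤ (N:ℝ) := by linarith
    have h1 : L^2 - L ≤ ((N:ℝ)+1)^2 - ((N:ℝ)+1) := by
      nlinarith only [hNle, hNgt, hL1, hL0, Nat.cast_nonneg (α := ℝ) N]
    have hLRdiv : L/(2*(R:ℝ)) ≤ 1 := by
      rw [div_le_one (by positivity)]; linarith
    have heq2 : -(L^2 - L)/(2*(R:ℝ)) = -(Real.log R)^2/2 + L/(2*(R:ℝ)) := by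
      rw [hL2]; field_simp; ring
    have hsq6 : 3*Real.log R ≤ (Real.log R)^2/2 := by nlinarith only [hlog6, hlogR0]
    have hmono : -(((N:ℝ)+1)^2 - ((N:ℝ)+1))/(2*(R:ℝ)) ≤ -(L^2 - L)/(2*(R:ℝ)) := by
      apply (div_le_div_iff_of_pos_right (by positivity : (0:ℝ) < 2*(R:ℝ))).mpr
      linarith
    linarith [hmono, heq2, hsq6, hLRdiv]
  have hexp23 : Real.exp (2 - 3*Real.log R) = Real.exp 2 / (R:ℝ)^3 := by
    rw [Real.exp_sub]
    congr 1
    rw [show (3:ℝ)*Real.log R = ((3:ℕ):ℝ)*Real.log R by norm_num, Real.exp_nat_mul,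
      Real.exp_log hRpos]
  have he2 : Real.exp 2 ≤ 9 := by
    have h : Real.exp 1 ^ 2 = Real.exp 2 := by
      rw [Real.exp_one_pow]; norm_num
    have ha : Real.exp 1 ≤ 2.72 := le_of_lt (lt_trans Real.exp_one_lt_d9 (by norm_num))
    nlinarith only [ha, Real.exp_pos 1, h]
  -- tail endpoint bounds
  have htlow : tR R (R - (N+1)) ≤ 9*μ/(R:ℝ)^3 := by
    have h1 := tR_minus_le R hR0 (N+1) hN1R
    have hcast : ((N+1:ℕ):ℝ) = (N:ℝ)+1 := by push_cast; ring
    rw [hcast] at h1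
    refine h1.trans ?_
    have h2 : tR R R * Real.exp (-(((N:ℝ)+1)^2 - ((N:ℝ)+1))/(2*(R:ℝ)))
        ≤ μ * Real.exp (2 - 3*Real.log R) := by
      apply mul_le_mul hA_up (Real.exp_le_exp.mpr (by linarith)) (Real.exp_pos _).le hμpos.le
    refine h2.trans ?_
    rw [hexp23]
    calc μ * (Real.exp 2 / (R:ℝ)^3) = μ * Real.exp 2 / (R:ℝ)^3 := by ring
      _ ≤ 9*μ/(R:ℝ)^3 := by
          apply (div_le_div_iff_of_pos_right (by positivity : (0:ℝ) < (R:ℝ)^3)).mpr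
          nlinarith only [hμpos, he2]
  have hthigh : tR R (R + (N+1)) ≤ 9*μ/(R:ℝ)^3 := by
    have hk2R : 2*((N+1:ℕ):ℝ) ≤ (R:ℝ) := by push_cast; linarith
    have h1 := tR_plus_le R hR0 (N+1) hk2R
    have hcast : ((N+1:ℕ):ℝ) = (N:ℝ)+1 := by push_cast; ring
    rw [hcast] at h1
    refine h1.trans ?_
    have hexple : -((((N:ℝ)+1)^2 + ((N:ℝ)+1))/(2*(R:ℝ))) + 2*((N:ℝ)+1)^3/(R:ℝ)^2
        ≤ 2 - 3*Real.log R := by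
      have hmono2 : -((((N:ℝ)+1)^2 + ((N:ℝ)+1))/(2*(R:ℝ)))
          ≤ -(((N:ℝ)+1)^2 - ((N:ℝ)+1))/(2*(R:ℝ)) := by
        have hdiff : -(((N:ℝ)+1)^2 - ((N:ℝ)+1))/(2*(R:ℝ))
            - (-((((N:ℝ)+1)^2 + ((N:ℝ)+1))/(2*(R:ℝ)))) = ((N:ℝ)+1)/(R:ℝ) := by
          field_simp
          ring
        have hpos2 : (0:ℝ) ≤ ((N:ℝ)+1)/(R:ℝ) := by positivity
        linarith only [hdiff, hpos2]
      linarith [ht3, htailexp]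
    have h2 : tR R R * Real.exp (-((((N:ℝ)+1)^2 + ((N:ℝ)+1))/(2*(R:ℝ))) + 2*((N:ℝ)+1)^3/(R:ℝ)^2)
        ≤ μ * Real.exp (2 - 3*Real.log R) := by
      apply mul_le_mul hA_up (Real.exp_le_exp.mpr hexple) (Real.exp_pos _).le hμpos.le
    refine h2.trans ?_
    rw [hexp23]
    calc μ * (Real.exp 2 / (R:ℝ)^3) = μ * Real.exp 2 / (R:ℝ)^3 := by ring
      _ ≤ 9*μ/(R:ℝ)^3 := by
          apply (div_le_div_iff_of_pos_right (by positivity : (0:ℝ) < (R:ℝ)^3)).mpr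
          nlinarith only [hμpos, he2]
  -- ===== the series and its pieces =====
  set z : ℂ := (R:ℂ) * e θ with hzdef
  set f : ℕ → ℂ := fun n => ξ n * z ^ n / (Nat.factorial n) with hfdef
  have hf_eq : ∀ n : ℕ, f n = ξ n * e ((n:ℝ) * θ) * ((tR R n : ℝ) : ℂ) := by
    intro n
    rw [hfdef]
    simp only []
    rw [hzdef, mul_pow, e_pow]
    simp only [tR]
    push_cast
    ring
  have hf_norm : ∀ n : ℕ, ‖f n‖ = ‖ξ n‖ * tR R n := by
    intro n
    rw [hf_eq n, norm_mul, norm_mul, e_norm, Complex.norm_real, Real.norm_eq_abs,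
      abs_of_pos (tR_pos R n hR0), mul_one]
  have htRsum : Summable (fun n => tR R n) := by
    have := Real.summable_pow_div_factorial (R:ℝ)
    exact this
  have hsumf : Summable f := by
    apply Summable.of_norm_bounded (htRsum.mul_left M)
    intro n
    rw [hf_norm n]
    exact mul_le_mul_of_nonneg_right (hbdd n) (tR_pos R n hR0).le
  set g : ℕ → ℂ := fun m =>
    ξ m * e ((m:ℝ) * θ) * ((μ * Real.exp (-((m:ℝ) - R)^2 / (2*(R:ℝ))) : ℝ) : ℂ) with hgdef
  set T1 : ℂ := ∑ n ∈ Finset.range (R - N), f n with hT1def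
  set SB : ℂ := ∑ m ∈ Finset.Ico (R - N) (R + N + 1), f m with hSBdef
  set T2 : ℂ := ∑' i : ℕ, f (i + (R + N + 1)) with hT2def
  set SW : ℂ := ∑ m ∈ Finset.Ico (R - N) (R + N + 1), g m with hSWdef
  have hFeq : Fxi ξ z = T1 + SB + T2 := by
    have hFxi : Fxi ξ z = ∑' n : ℕ, f n := rfl
    rw [hFxi]
    have h := hsumf.sum_add_tsum_nat_add (R + N + 1)
    have hsplit : ∑ i ∈ Finset.range (R + N + 1), f i = T1 + SB := by
      rw [hT1def, hSBdef, Finset.range_eq_Ico,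
        ← Finset.sum_Ico_consecutive f (Nat.zero_le (R - N)) (by omega : R - N ≤ R + N + 1),
        ← Finset.range_eq_Ico]
    rw [← h, hsplit, hT2def]
  -- ===== SW equals μ e(Rθ) W =====
  have hNZ : (⌊L⌋ : ℤ) = (N : ℤ) := by
    rw [hNdef]; exact (Int.toNat_of_nonneg hNf0).symm
  have hSW_eq : ((μ : ℝ) : ℂ) * e ((R:ℝ) * θ) * W ξ R θ = SW := by
    unfold W
    rw [← hLdef, Finset.mul_sum, hSWdef,
      show R + N + 1 = (R + N) + 1 from rfl, Finset.Ico_add_one_right_eq_Icc]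
    apply Finset.sum_nbij' (i := fun n : ℤ => (n + R).toNat) (j := fun m : ℕ => (m : ℤ) - R)
    · intro n hn
      rw [Finset.mem_Icc] at hn ⊢
      rw [hNZ] at hn
      omega
    · intro m hm
      rw [Finset.mem_Icc] at hm ⊢
      rw [hNZ]
      omega
    · intro n hn
      rw [Finset.mem_Icc] at hn
      rw [hNZ] at hn
      omega
    · intro m hm
      rw [Finset.mem_Icc] at hm
      omega
    · intro n hn
      rw [Finset.mem_Icc] at hn
      rw [hNZ] at hn
      rw [hgdef]
      simp only []
      have hcast : (((n + R).toNat : ℕ) : ℝ) = (n : ℝ) + R := by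
        have h0 : (0:ℤ) ≤ n + R := by omega
        exact_mod_cast congrArg (Int.cast : ℤ → ℝ) (Int.toNat_of_nonneg h0)
      rw [hcast]
      have hesplit : e (((n:ℝ) + R) * θ) = e ((n:ℝ) * θ) * e ((R:ℝ) * θ) := by
        rw [← e_add]; congr 1; ring
      rw [hesplit]
      have hexparg : (((n:ℝ) + R) - R)^2 = (n:ℝ)^2 := by ring
      rw [hexparg]
      push_cast
      ring
  have hnormSW : ‖SW‖ = μ * ‖W ξ R θ‖ := by
    rw [← hSW_eq, norm_mul, norm_mul, e_norm, Complex.norm_real, Real.norm_eq_abs,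
      abs_of_pos hμpos, mul_one]
  -- ===== E1 : lower tail =====
  have hT1sum : ∑ n ∈ Finset.range (R - N), tR R n ≤ μ := by
    have hm : R - N = (R - (N+1)) + 1 := by omega
    have hm0R : ((R - (N+1) : ℕ):ℝ) < (R:ℝ) := by
      rw [Nat.cast_sub hN1R]; push_cast; linarith
    have h1 := tail_low R (R - (N+1)) hR0 hm0R
    rw [← hm] at h1
    have hdenom : (R:ℝ) - ((R - (N+1) : ℕ):ℝ) = (N:ℝ) + 1 := by
      rw [Nat.cast_sub hN1R]; push_cast; ring
    have h2 : (R:ℝ) / ((R:ℝ) - ((R - (N+1) : ℕ):ℝ)) ≤ (R:ℝ) := by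
      rw [hdenom]
      apply div_le_self hRpos.le (by linarith [Nat.cast_nonneg (α := ℝ) N])
    refine h1.trans ?_
    calc tR R (R - (N+1)) * ((R:ℝ) / ((R:ℝ) - ((R - (N+1) : ℕ):ℝ)))
        ≤ (9*μ/(R:ℝ)^3) * (R:ℝ) := by
          apply mul_le_mul htlow h2 (by rw [hdenom]; positivity) (by positivity)
      _ = 9*μ/(R:ℝ)^2 := by field_simp
      _ ≤ μ := by
          rw [div_le_iff₀ (by positivity)]
          have hR9 : (0:ℝ) ≤ (R:ℝ)^2 - 9 := by nlinarith only [hR32]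
          nlinarith only [mul_nonneg hμpos.le hR9]
  have hE1 : ‖T1‖ ≤ M * μ := by
    rw [hT1def]
    refine le_trans (norm_sum_le _ _) ?_
    calc ∑ n ∈ Finset.range (R - N), ‖f n‖
        ≤ ∑ n ∈ Finset.range (R - N), M * tR R n := by
          apply Finset.sum_le_sum
          intro n _
          rw [hf_norm n]
          exact mul_le_mul_of_nonneg_right (hbdd n) (tR_pos R n hR0).le
      _ = M * ∑ n ∈ Finset.range (R - N), tR R n := by rw [Finset.mul_sum]
      _ ≤ M * μ := mul_le_mul_of_nonneg_left hT1sum hM0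
  -- ===== E2 : upper tail =====
  have hKR : (R:ℝ) < ((R + N + 1 : ℕ):ℝ) := by push_cast; linarith [Nat.cast_nonneg (α := ℝ) N]
  obtain ⟨hsumtail, htail2⟩ := tail_high R (R + N + 1) hR0 hKR
  have hT2sum : tR R (R + N + 1) * (((R + N + 1 : ℕ):ℝ) / (((R + N + 1 : ℕ):ℝ) - R)) ≤ μ := by
    have hKsub : ((R + N + 1 : ℕ):ℝ) - (R:ℝ) = (N:ℝ) + 1 := by push_cast; ring
    have hKle : ((R + N + 1 : ℕ):ℝ) ≤ 2*(R:ℝ) := by push_cast; linarith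
    have h2 : ((R + N + 1 : ℕ):ℝ) / (((R + N + 1 : ℕ):ℝ) - R) ≤ 2*(R:ℝ) := by
      rw [hKsub]
      calc ((R + N + 1 : ℕ):ℝ) / ((N:ℝ) + 1) ≤ ((R + N + 1 : ℕ):ℝ) :=
            div_le_self (by positivity) (by linarith [Nat.cast_nonneg (α := ℝ) N])
        _ ≤ 2*(R:ℝ) := hKle
    have h3 : tR R (R + N + 1) ≤ 9*μ/(R:ℝ)^3 := by
      have : R + N + 1 = R + (N + 1) := by omega
      rw [this]
      exact hthigh
    calc tR R (R + N + 1) * (((R + N + 1 : ℕ):ℝ) / (((R + N + 1 : ℕ):ℝ) - R))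
        ≤ (9*μ/(R:ℝ)^3) * (2*(R:ℝ)) := by
          apply mul_le_mul h3 h2 (by rw [hKsub]; positivity) (by positivity)
      _ = 18*μ/(R:ℝ)^2 := by field_simp; ring
      _ ≤ μ := by
          rw [div_le_iff₀ (by positivity)]
          have hR18 : (0:ℝ) ≤ (R:ℝ)^2 - 18 := by nlinarith only [hR32]
          nlinarith only [mul_nonneg hμpos.le hR18]
  have hE2 : ‖T2‖ ≤ M * μ := by
    rw [hT2def]
    have hbnd : ∀ i : ℕ, ‖f (i + (R + N + 1))‖ ≤ M * tR R ((R + N + 1) + i) := by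
      intro i
      rw [hf_norm]
      have : i + (R + N + 1) = (R + N + 1) + i := by omega
      rw [this]
      exact mul_le_mul_of_nonneg_right (hbdd _) (tR_pos R _ hR0).le
    have hsumM : Summable (fun i : ℕ => M * tR R ((R + N + 1) + i)) := hsumtail.mul_left M
    have hsumnorm : Summable (fun i : ℕ => ‖f (i + (R + N + 1))‖) :=
      Summable.of_nonneg_of_le (fun i => norm_nonneg _) hbnd hsumM
    calc ‖∑' i : ℕ, f (i + (R + N + 1))‖ ≤ ∑' i : ℕ, ‖f (i + (R + N + 1))‖ :=
          norm_tsum_le_tsum_norm hsumnorm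
      _ ≤ ∑' i : ℕ, M * tR R ((R + N + 1) + i) := Summable.tsum_le_tsum hbnd hsumnorm hsumM
      _ = M * ∑' i : ℕ, tR R ((R + N + 1) + i) := tsum_mul_left
      _ ≤ M * μ := by
          apply mul_le_mul_of_nonneg_left ?_ hM0
          exact le_trans htail2 hT2sum
  -- ===== E3 : block =====
  have hfg : ∀ m ∈ Finset.Ico (R - N) (R + N + 1),
      ‖f m - g m‖ ≤ M * (μ * (Real.exp Δ - 1)) := by
    intro m hm
    have hfgm : f m - g m = ξ m * e ((m:ℝ) * θ) *
        (((tR R m - μ * Real.exp (-((m:ℝ) - R)^2 / (2*(R:ℝ)))) : ℝ) : ℂ) := by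
      rw [hf_eq m, hgdef]
      simp only []
      push_cast
      ring
    rw [hfgm, norm_mul, norm_mul, e_norm, Complex.norm_real, Real.norm_eq_abs, mul_one]
    exact mul_le_mul (hbdd m) (hblock m hm) (abs_nonneg _) hM0
  have hcardIco : ((Finset.Ico (R - N) (R + N + 1)).card : ℝ) = 2*(N:ℝ) + 1 := by
    rw [Nat.card_Ico]
    have : R + N + 1 - (R - N) = 2*N + 1 := by omega
    rw [this]
    push_cast
    ring
  have hE3 : ‖SB - SW‖ ≤ (2*(N:ℝ)+1) * (M * (μ * (Real.exp Δ - 1))) := by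
    rw [hSBdef, hSWdef, ← Finset.sum_sub_distrib]
    refine le_trans (norm_sum_le _ _) ?_
    refine le_trans (Finset.sum_le_sum hfg) ?_
    rw [Finset.sum_const, nsmul_eq_mul, hcardIco]
  -- numeric bound on (2N+1)(expΔ−1)
  have hE3num : (2*(N:ℝ)+1) * (Real.exp Δ - 1) ≤ 146 * (Real.log R)^4 := by
    have h1 : (2*(N:ℝ)+1) * (Real.exp Δ - 1) ≤ (3*L) * (3*Δ) := by
      apply mul_le_mul h2N3L hper (by linarith) (by linarith [hL1])
    have hLΔ : (3*L) * (3*Δ) = 9*L*(1/(2*(R:ℝ))) + 9*L*(((N:ℝ)+1)/(2*(R:ℝ)))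
        + 9*L*(2*((N:ℝ)+1)^3/(R:ℝ)^2) := by rw [hΔdef]; ring
    have b1 : 9*L*(1/(2*(R:ℝ))) ≤ (Real.log R)^4 := by
      have : 9*L*(1/(2*(R:ℝ))) ≤ 9*((R:ℝ)/32)*(1/(2*(R:ℝ))) := by
        apply mul_le_mul_of_nonneg_right (by linarith only [hLR32]) (by positivity)
      have h2 : 9*((R:ℝ)/32)*(1/(2*(R:ℝ))) = 9/64 := by
        field_simp
        ring
      nlinarith only [hlog4_1296, this, h2]
    have b2 : 9*L*(((N:ℝ)+1)/(2*(R:ℝ))) ≤ (Real.log R)^4 := by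
      have h1' : ((N:ℝ)+1)/(2*(R:ℝ)) ≤ L/(R:ℝ) := by
        rw [div_le_div_iff₀ (by positivity) (by positivity)]
        nlinarith only [hN1L, hRpos]
      have h2' : 9*L*(((N:ℝ)+1)/(2*(R:ℝ))) ≤ 9*L*(L/(R:ℝ)) :=
        mul_le_mul_of_nonneg_left h1' (by linarith only [hL1])
      have h3' : 9*L*(L/(R:ℝ)) = 9*(L^2/(R:ℝ)) := by ring
      have h4' : L^2/(R:ℝ) = (Real.log R)^2 := by
        rw [hL2]
        field_simp
      have h5' : 9*(Real.log R)^2 ≤ (Real.log R)^4 := by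
        nlinarith only [hlog6, hlogR0, sq_nonneg (Real.log (R:ℝ) - 6), sq_nonneg ((Real.log (R:ℝ))^2 - 9)]
      have h6' : 9*L*(L/(R:ℝ)) = 9*(Real.log R)^2 := by rw [h3', h4']
      linarith [h2', h5', h6']
    have b3 : 9*L*(2*((N:ℝ)+1)^3/(R:ℝ)^2) ≤ 144 * (Real.log R)^4 := by
      have h1' : 2*((N:ℝ)+1)^3 ≤ 16*L^3 := by linarith
      have h2' : 9*L*(2*((N:ℝ)+1)^3/(R:ℝ)^2) ≤ 9*L*(16*L^3/(R:ℝ)^2) := by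
        apply mul_le_mul_of_nonneg_left ?_ (by linarith only [hL1])
        exact (div_le_div_iff_of_pos_right (by positivity : (0:ℝ) < (R:ℝ)^2)).mpr h1'

      have h3' : 9*L*(16*L^3/(R:ℝ)^2) = 144*(L^4/(R:ℝ)^2) := by ring
      have h4' : L^4/(R:ℝ)^2 = (Real.log R)^4 := by
        rw [hL4]
        field_simp
      linarith only [h2', h3', h4']
    have h1b := h1
    rw [hLΔ] at h1b
    linarith [h1b, b1, b2, b3]
  -- ===== log^4 ≤ (4/ε)^4 R^ε =====
  have hlog4eps : (Real.log R)^4 ≤ (4/ε)^4 * (R:ℝ)^ε := by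
    have h1 : Real.log R ≤ (4/ε) * (R:ℝ)^(ε/4) := by
      have h2 : Real.log ((R:ℝ)^(ε/4)) = (ε/4) * Real.log R := Real.log_rpow hRpos _
      have h3 : Real.log ((R:ℝ)^(ε/4)) ≤ (R:ℝ)^(ε/4) := by
        have hp : (0:ℝ) < (R:ℝ)^(ε/4) := Real.rpow_pos_of_pos hRpos _
        linarith [Real.log_le_sub_one_of_pos hp]
      have h4 : Real.log R = (4/ε) * Real.log ((R:ℝ)^(ε/4)) := by
        rw [h2]; field_simp
      rw [h4]
      apply mul_le_mul_of_nonneg_left h3 (by positivity)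
    have h5 : (Real.log R)^4 ≤ ((4/ε) * (R:ℝ)^(ε/4))^4 := pow_le_pow_left₀ hlogR0 h1 4
    have h6 : ((4/ε) * (R:ℝ)^(ε/4))^4 = (4/ε)^4 * ((R:ℝ)^(ε/4))^4 := by ring
    have h7 : ((R:ℝ)^(ε/4))^(4:ℕ) = (R:ℝ)^ε := by
      rw [← Real.rpow_natCast ((R:ℝ)^(ε/4)) 4, ← Real.rpow_mul hRpos.le]
      norm_num
    rw [h6, h7] at h5
    exact h5
  -- ===== final assembly =====
  have htotal : ‖T1‖ + ‖SB - SW‖ + ‖T2‖ ≤ μ * (M * c) * (R:ℝ)^ε := by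
    have hE3' : ‖SB - SW‖ ≤ M * μ * (146 * (Real.log R)^4) := by
      refine hE3.trans ?_
      have : (2*(N:ℝ)+1) * (M * (μ * (Real.exp Δ - 1)))
          = M * μ * ((2*(N:ℝ)+1) * (Real.exp Δ - 1)) := by ring
      rw [this]
      exact mul_le_mul_of_nonneg_left hE3num (by positivity)
    have h2' : (2:ℝ) ≤ 2 * (Real.log R)^4 := by linarith only [hlog4_1296]
    have hsum : ‖T1‖ + ‖SB - SW‖ + ‖T2‖ ≤ M * μ * (148 * (Real.log R)^4) := by
      nlinarith only [hE1, hE2, hE3', hlog4_1296, mul_nonneg hM0 hμpos.le]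
    refine hsum.trans ?_
    have h9 : M * μ * (148 * (Real.log R)^4) ≤ M * μ * (148 * ((4/ε)^4 * (R:ℝ)^ε)) := by
      apply mul_le_mul_of_nonneg_left ?_ (by positivity)
      apply mul_le_mul_of_nonneg_left hlog4eps (by norm_num)
    refine h9.trans ?_
    have h10 : 148 * (4/ε)^4 ≤ c := by
      rw [hc]
      have h11 : (0:ℝ) ≤ (4/ε)^4 := by positivity
      have h12 : (0:ℝ) ≤ 5 * (2:ℝ)^112 := by positivity
      linarith only [h11, h12]
    calc M * μ * (148 * ((4/ε)^4 * (R:ℝ)^ε)) = μ * (M * (148 * (4/ε)^4)) * (R:ℝ)^ε := by ring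
      _ ≤ μ * (M * c) * (R:ℝ)^ε := by
          apply mul_le_mul_of_nonneg_right ?_ (by positivity)
          apply mul_le_mul_of_nonneg_left ?_ hμpos.le
          exact mul_le_mul_of_nonneg_left h10 hM0
  have hlowF : ‖SW‖ - ‖Fxi ξ z‖ ≤ ‖T1‖ + ‖SB - SW‖ + ‖T2‖ := by
    have hd : SW - Fxi ξ z = -(T1 + (SB - SW) + T2) := by rw [hFeq]; ring
    calc ‖SW‖ - ‖Fxi ξ z‖ ≤ ‖SW - Fxi ξ z‖ := norm_sub_norm_le _ _
      _ = ‖T1 + (SB - SW) + T2‖ := by rw [hd, norm_neg]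
      _ ≤ ‖T1 + (SB - SW)‖ + ‖T2‖ := norm_add_le _ _
      _ ≤ ‖T1‖ + ‖SB - SW‖ + ‖T2‖ := by linarith [norm_add_le T1 (SB - SW)]
  have hexpand : μ * (‖W ξ R θ‖ - M * c * (R:ℝ)^ε)
      = μ * ‖W ξ R θ‖ - μ * (M * c) * (R:ℝ)^ε := by ring
  rw [ge_iff_le, hexpand]
  linarith [hlowF, htotal, hnormSW]

end Lem3

/-- Lemma 3 of the paper: for bounded `ξ` and every `ε > 0` there is `C_ε` such that
`|F_ξ(R e(θ))| ≥ μ(R)(|W_R(θ)| - C_ε R^ε)` with `μ(R) = e^R/√(2πR)`. -/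
theorem stmt_3 (ξ : ℕ → ℂ) (M : ℝ) (hbdd : ∀ n, ‖ξ n‖ ≤ M) (ε : ℝ) (hε : 0 < ε) :
    ∃ C : ℝ, ∀ R : ℕ, 2 ≤ R → ∀ θ : ℝ,
      ‖Fxi ξ ((R : ℂ) * e θ)‖ ≥
        Real.exp R / Real.sqrt (2 * Real.pi * R) * (‖W ξ R θ‖ - C * (R : ℝ) ^ ε) := by
  exact Lem3.stmt_3' ξ M hbdd ε hε
end

section
/- Let f : [M₁, M₂] → ℝ be differentiable with f' monotone and f'(x) ≥ m > 0 on [M₁, M₂]. Then |∫_{M₁}^{M₂} e^{2πi f(x)} dx| ≤ 4/m. -/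
open Set MeasureTheory intervalIntegral Function

lemma mono_ordConn_cont {a b : ℝ} {d : ℝ → ℝ} (hd : MonotoneOn d (Set.Icc a b))
    (hord : Set.OrdConnected (d '' Set.Icc a b)) : ContinuousOn d (Set.Icc a b) := by
  intro x hx
  have hR : ContinuousWithinAt d (Set.Icc x b) x := by
    rcases eq_or_lt_of_le hx.2 with hxb | hxb
    · subst hxb
      rw [Set.Icc_self]
      exact continuousWithinAt_singleton
    · by_cases hcap : ∀ c ∈ Set.Icc a b, d c ≤ d x
      · -- d is constant = d x on [x, b]
        apply continuousWithinAt_const.congr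
        · intro y hy
          exact le_antisymm (hcap y ⟨hx.1.trans hy.1, hy.2⟩)
            (hd hx ⟨hx.1.trans hy.1, hy.2⟩ hy.1)
        · rfl
      · push_neg at hcap
        obtain ⟨c, hc, hcx⟩ := hcap
        have h1 : ContinuousWithinAt d (Set.Ici x) x := by
          apply continuousWithinAt_right_of_monotoneOn_of_exists_between hd
          · -- Icc a b ∈ 𝓝[≥] x
            apply mem_nhdsWithin.2
            exact ⟨Set.Iio b, isOpen_Iio, hxb, fun y hy => ⟨hx.1.trans hy.2, le_of_lt hy.1⟩⟩
          · intro y hy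
            obtain ⟨z, hz1, hz2⟩ := exists_between (lt_min hcx hy)
            have hzim : z ∈ d '' Set.Icc a b :=
              hord.out ⟨x, hx, rfl⟩ ⟨c, hc, rfl⟩ ⟨hz1.le, (hz2.trans_le (min_le_left _ _)).le⟩
            obtain ⟨w, hw, hwz⟩ := hzim
            exact ⟨w, hw, by rw [hwz]; exact ⟨hz1, hz2.trans_le (min_le_right _ _)⟩⟩
        exact (h1.mono Set.Icc_subset_Ici_self)
  have hL : ContinuousWithinAt d (Set.Icc a x) x := by
    rcases eq_or_lt_of_le hx.1 with hax | hax
    · subst hax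
      rw [Set.Icc_self]
      exact continuousWithinAt_singleton
    · by_cases hcap : ∀ c ∈ Set.Icc a b, d x ≤ d c
      · apply continuousWithinAt_const.congr
        · intro y hy
          exact le_antisymm (hd ⟨hy.1, hy.2.trans hx.2⟩ hx hy.2) (hcap y ⟨hy.1, hy.2.trans hx.2⟩)
        · rfl
      · push_neg at hcap
        obtain ⟨c, hc, hcx⟩ := hcap
        have h1 : ContinuousWithinAt d (Set.Iic x) x := by
          apply continuousWithinAt_left_of_monotoneOn_of_exists_between hd
          · apply mem_nhdsWithin.2
            exact ⟨Set.Ioi a, isOpen_Ioi, hax, fun y hy => ⟨le_of_lt hy.1, hy.2.trans hx.2⟩⟩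
          · intro y hy
            obtain ⟨z, hz1, hz2⟩ := exists_between (max_lt hcx hy)
            have hzim : z ∈ d '' Set.Icc a b :=
              hord.out ⟨c, hc, rfl⟩ ⟨x, hx, rfl⟩ ⟨((le_max_left _ _).trans_lt hz1).le, hz2.le⟩
            obtain ⟨w, hw, hwz⟩ := hzim
            exact ⟨w, hw, by rw [hwz]; exact ⟨(le_max_right _ _).trans_lt hz1, hz2⟩⟩
        exact (h1.mono Set.Icc_subset_Iic_self)
  have := hL.union hR
  apply this.mono
  intro y hy
  rcases le_total y x with h | h
  · exact Or.inl ⟨hy.1, h⟩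
  · exact Or.inr ⟨h, hy.2⟩

lemma key_mono {a b : ℝ} (hab : a ≤ b) (g : ℝ → ℂ) (hg : Continuous g) (C : ℝ) (hC0 : 0 ≤ C)
    (hC : ∀ t ∈ Set.Icc a b, ‖∫ x in t..b, g x‖ ≤ C)
    (ψ : ℝ → ℝ) (hψ : Monotone ψ) (hψc : Continuous ψ) :
    ‖∫ x in a..b, ψ x • g x‖ ≤ C * |ψ a| + 2 * C * (ψ b - ψ a) := by
  set S : StieltjesFunction ℝ := ⟨ψ, hψ, fun x => hψc.continuousWithinAt⟩ with hS
  set μ := S.measure with hμ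
  have hμIoc : ∀ x y : ℝ, μ (Set.Ioc x y) = ENNReal.ofReal (ψ y - ψ x) := fun x y =>
    S.measure_Ioc x y
  -- finiteness instances
  haveI hfin : IsFiniteMeasure (μ.restrict (Set.Ioc a b)) := by
    constructor
    rw [Measure.restrict_apply_univ, hμIoc]
    exact ENNReal.ofReal_lt_top
  haveI hfin2 : IsFiniteMeasure ((volume : Measure ℝ).restrict (Set.Ioc a b)) := by
    constructor
    rw [Measure.restrict_apply_univ, Real.volume_Ioc]
    exact ENNReal.ofReal_lt_top
  -- split the integral
  have hInt1 : IntervalIntegrable (fun x => ψ a • g x) volume a b :=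
    (hg.const_smul (ψ a)).intervalIntegrable a b
  have hInt2 : IntervalIntegrable (fun x => (ψ x - ψ a) • g x) volume a b := by
    exact (((hψc.sub continuous_const).smul hg)).intervalIntegrable a b
  have hsplit : (∫ x in a..b, ψ x • g x) =
      (∫ x in a..b, ψ a • g x) + ∫ x in a..b, (ψ x - ψ a) • g x := by
    rw [← intervalIntegral.integral_add hInt1 hInt2]
    congr 1
    ext x
    rw [← add_smul]
    ring_nf
  -- first term bound
  have hterm1 : ‖∫ x in a..b, ψ a • g x‖ ≤ C * |ψ a| := by
    rw [intervalIntegral.integral_smul, norm_smul]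
    rw [mul_comm]
    apply mul_le_mul_of_nonneg_right (by simpa using hC a ⟨le_refl a, hab⟩) (abs_nonneg _)
  -- second term: Fubini with Stieltjes measure
  set T := ∫ x in a..b, (ψ x - ψ a) • g x with hT
  have hterm2 : ‖T‖ ≤ C * (ψ b - ψ a) := by
    -- rewrite as double integral
    obtain ⟨K, hK⟩ := (isCompact_Icc (a := a) (b := b)).exists_bound_of_continuousOn
      hg.continuousOn
    have hTeq : T = ∫ x in Set.Ioc a b,
        ∫ t in Set.Ioc a b, (Set.Iic x).indicator (fun _ => g x) t ∂μ := by
      rw [hT, intervalIntegral.integral_of_le hab]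
      apply setIntegral_congr_fun measurableSet_Ioc
      intro x hx
      show (ψ x - ψ a) • g x = ∫ t in Set.Ioc a b, (Set.Iic x).indicator (fun _ => g x) t ∂μ
      rw [setIntegral_indicator measurableSet_Iic]
      have : Set.Ioc a b ∩ Set.Iic x = Set.Ioc a x := by
        ext t; simp only [Set.mem_inter_iff, Set.mem_Ioc, Set.mem_Iic]
        exact ⟨fun h => ⟨h.1.1, h.2⟩, fun h => ⟨⟨h.1, h.2.trans hx.2⟩, h.2⟩⟩
      rw [this, setIntegral_const, Measure.real, hμIoc, ENNReal.toReal_ofReal (by linarith [hψ hx.1.le] : 0 ≤ ψ x - ψ a)]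
    -- integrability on product
    have hmeas : AEStronglyMeasurable
        (uncurry fun x t => (Set.Iic x).indicator (fun _ => g x) t)
        (((volume : Measure ℝ).restrict (Set.Ioc a b)).prod (μ.restrict (Set.Ioc a b))) := by
      have : (uncurry fun x t => (Set.Iic x).indicator (fun _ => g x) t) =
          Set.indicator {p : ℝ × ℝ | p.2 ≤ p.1} (fun p => g p.1) := by
        ext p
        simp only [uncurry, Set.indicator, Set.mem_Iic, Set.mem_setOf_eq]
      rw [this]
      exact (((hg.comp continuous_fst).stronglyMeasurable).indicator
        (measurableSet_le measurable_snd measurable_fst)).aestronglyMeasurable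
    have hIntProd : Integrable (uncurry fun x t => (Set.Iic x).indicator (fun _ => g x) t)
        (((volume : Measure ℝ).restrict (Set.Ioc a b)).prod (μ.restrict (Set.Ioc a b))) := by
      apply Integrable.mono' (integrable_const K) hmeas
      rw [Measure.prod_restrict]
      filter_upwards [ae_restrict_mem (measurableSet_Ioc.prod measurableSet_Ioc)] with p hp
      calc ‖(Set.Iic p.1).indicator (fun _ => g p.1) p.2‖
          ≤ ‖g p.1‖ := by
            by_cases h : p.2 ∈ Set.Iic p.1 <;> simp [Set.indicator, h]
        _ ≤ K := hK p.1 (Set.Ioc_subset_Icc_self hp.1)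
    have hswap := MeasureTheory.integral_integral_swap hIntProd
    rw [hTeq, hswap]
    -- bound the outer integral
    have hbound : ∀ t ∈ Set.Ioc a b,
        ‖∫ x in Set.Ioc a b, (Set.Iic x).indicator (fun _ => g x) t ∂volume‖ ≤ C := by
      intro t ht
      have heq1 : (fun x => (Set.Iic x).indicator (fun _ => g x) t) =
          (Set.Ici t).indicator g := by
        ext x
        simp only [Set.indicator, Set.mem_Iic, Set.mem_Ici]
      rw [heq1, setIntegral_indicator measurableSet_Ici]
      have : Set.Ioc a b ∩ Set.Ici t = Set.Icc t b := by
        ext x; simp only [Set.mem_inter_iff, Set.mem_Ioc, Set.mem_Icc, Set.mem_Ici]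
        exact ⟨fun h => ⟨h.2, h.1.2⟩, fun h => ⟨⟨ht.1.trans_le h.1, h.2⟩, h.1⟩⟩
      rw [this, MeasureTheory.integral_Icc_eq_integral_Ioc,
        ← intervalIntegral.integral_of_le ht.2]
      exact hC t ⟨ht.1.le, ht.2⟩
    calc ‖∫ t in Set.Ioc a b, (∫ x in Set.Ioc a b,
            (Set.Iic x).indicator (fun _ => g x) t ∂volume) ∂μ‖
        ≤ C * (μ (Set.Ioc a b)).toReal := by
          apply norm_setIntegral_le_of_norm_le_const _ hbound
          rw [hμIoc]; exact ENNReal.ofReal_lt_top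
      _ = C * (ψ b - ψ a) := by
          rw [hμIoc, ENNReal.toReal_ofReal (by linarith [hψ hab] : 0 ≤ ψ b - ψ a)]
  have hba : 0 ≤ ψ b - ψ a := by linarith [hψ hab]
  calc ‖∫ x in a..b, ψ x • g x‖ ≤ ‖∫ x in a..b, ψ a • g x‖ + ‖T‖ := by
        rw [hsplit]; exact norm_add_le _ _
    _ ≤ C * |ψ a| + C * (ψ b - ψ a) := add_le_add hterm1 hterm2
    _ ≤ C * |ψ a| + 2 * C * (ψ b - ψ a) := by nlinarith

lemma key_anti {a b : ℝ} (hab : a ≤ b) (g : ℝ → ℂ) (hg : Continuous g) (C : ℝ) (hC0 : 0 ≤ C)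
    (hC : ∀ t ∈ Set.Icc a b, ‖∫ x in t..b, g x‖ ≤ C)
    (ψ : ℝ → ℝ) (hψ : Antitone ψ) (hψc : Continuous ψ) :
    ‖∫ x in a..b, ψ x • g x‖ ≤ C * |ψ a| + 2 * C * (ψ a - ψ b) := by
  have h := key_mono hab g hg C hC0 hC (fun x => -ψ x) (fun x y hxy => neg_le_neg (hψ hxy))
    hψc.neg
  have h2 : (∫ x in a..b, (fun x => -ψ x) x • g x) = -∫ x in a..b, ψ x • g x := by
    rw [← intervalIntegral.integral_neg]
    congr 1; ext x; simp [neg_smul]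
  rw [h2, norm_neg, abs_neg] at h
  convert h using 2
  ring

/-- First-derivative (van der Corput) estimate for oscillatory integrals: if `f` is
differentiable on `[M₁, M₂]` with monotone derivative satisfying `f' ≥ m > 0` there, then
`|∫_{M₁}^{M₂} e^{2πi f(x)} dx| ≤ 4/m`. -/
theorem stmt_6 (M₁ M₂ : ℝ) (hM : M₁ < M₂) (f : ℝ → ℝ)
    (hf : ∀ x ∈ Set.Icc M₁ M₂, DifferentiableAt ℝ f x)
    (hmono : MonotoneOn (deriv f) (Set.Icc M₁ M₂) ∨ AntitoneOn (deriv f) (Set.Icc M₁ M₂))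
    (m : ℝ) (hm : 0 < m) (hlb : ∀ x ∈ Set.Icc M₁ M₂, m ≤ deriv f x) :
    ‖∫ x in M₁..M₂, Complex.exp (2 * Real.pi * Complex.I * (f x : ℂ))‖ ≤ 4 / m := by
  set a := M₁
  set b := M₂
  have hab : a ≤ b := hM.le
  set d := deriv f with hd
  set s := Set.Icc a b with hs
  -- continuity of the derivative (monotone + Darboux)
  have hdc : ContinuousOn d s := by
    rcases hmono with h | h
    · exact mono_ordConn_cont h (Set.ordConnected_Icc.image_deriv hf)
    · have hneg : MonotoneOn (fun x => -d x) s := fun x hx y hy hxy => neg_le_neg (h hx hy hxy)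
      have hordneg : Set.OrdConnected ((fun x => -d x) '' s) := by
        have : (fun x => -d x) = deriv (fun y => -f y) := by
          ext x; show -d x = deriv (-f) x; rw [deriv.neg]
        rw [this]
        exact Set.ordConnected_Icc.image_deriv (fun x hx => (hf x hx).neg)
      have := mono_ordConn_cont hneg hordneg
      have h2 : ContinuousOn (fun x => - -d x) s := this.neg
      simpa using h2
  have hfc : ContinuousOn f s := fun x hx => (hf x hx).continuousAt.continuousWithinAt
  -- projection onto [a,b]
  set proj : ℝ → ℝ := fun x => max a (min x b) with hproj
  have hproj_mem : ∀ x, proj x ∈ s := fun x =>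
    ⟨le_max_left _ _, max_le hab (min_le_right _ _)⟩
  have hproj_id : ∀ x ∈ s, proj x = x := by
    intro x hx
    simp only [hproj]
    rw [min_eq_left hx.2, max_eq_right hx.1]
  have hproj_cont : Continuous proj := continuous_const.max (continuous_id.min continuous_const)
  have hproj_monotone : Monotone proj := fun x y hxy =>
    max_le_max (le_refl a) (min_le_min hxy (le_refl b))
  -- positivity of d on s
  have hdpos : ∀ x ∈ s, 0 < d x := fun x hx => hm.trans_le (hlb x hx)
  set c : ℂ := 2 * Real.pi * Complex.I with hc
  have hcne : c ≠ 0 := by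
    simp [hc, Real.pi_ne_zero, Complex.I_ne_zero]
  -- the extended integrand and weight
  set g : ℝ → ℂ := fun x => Complex.exp (c * (f (proj x) : ℂ)) * (d (proj x) : ℂ) with hg
  set ψ : ℝ → ℝ := fun x => (d (proj x))⁻¹ with hψ
  have hdproj_cont : Continuous fun x => d (proj x) :=
    hdc.comp_continuous hproj_cont hproj_mem
  have hfproj_cont : Continuous fun x => f (proj x) :=
    hfc.comp_continuous hproj_cont hproj_mem
  have hgc : Continuous g := by
    apply Continuous.mul
    · exact Complex.continuous_exp.comp (continuous_const.mul (Complex.continuous_ofReal.comp hfproj_cont))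
    · exact Complex.continuous_ofReal.comp hdproj_cont
  have hψc : Continuous ψ := hdproj_cont.inv₀ fun x => (hdpos _ (hproj_mem x)).ne'
  -- FTC bound
  set C : ℝ := 1 / Real.pi with hC
  have hC0 : 0 ≤ C := by positivity
  have hEnorm : ∀ y : ℝ, ‖Complex.exp (c * (f y : ℂ)) / c‖ = 1 / (2 * Real.pi) := by
    intro y
    rw [norm_div]
    have h1 : ‖Complex.exp (c * (f y : ℂ))‖ = 1 := by
      rw [Complex.norm_exp]
      have : (c * (f y : ℂ)).re = 0 := by
        simp [hc]
      rw [this, Real.exp_zero]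
    rw [h1]
    have : ‖c‖ = 2 * Real.pi := by
      rw [hc]
      simp [Complex.norm_I, abs_of_nonneg Real.pi_pos.le]
    rw [this]
  have hFTC : ∀ t ∈ s, ‖∫ x in t..b, g x‖ ≤ C := by
    intro t ht
    have huIcc : Set.uIcc t b ⊆ s := by
      rw [Set.uIcc_of_le ht.2]
      exact fun y hy => ⟨ht.1.trans hy.1, hy.2⟩
    have hderiv : ∀ x ∈ Set.uIcc t b,
        HasDerivAt (fun y => Complex.exp (c * (f y : ℂ)) / c) (g x) x := by
      intro x hx
      have hxs : x ∈ s := huIcc hx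
      have h1 : HasDerivAt f (d x) x := (hf x hxs).hasDerivAt
      have h2 : HasDerivAt (fun y : ℝ => (f y : ℂ)) (d x) x := h1.ofReal_comp
      have h3 : HasDerivAt (fun y : ℝ => c * (f y : ℂ)) (c * d x) x := h2.const_mul c
      have h4 := h3.cexp
      have h5 := h4.div_const c
      have : Complex.exp (c * (f x : ℂ)) * (c * (d x : ℂ)) / c
          = g x := by
        rw [hg]
        simp only
        rw [hproj_id x hxs]
        field_simp
      rwa [this] at h5
    have := intervalIntegral.integral_eq_sub_of_hasDerivAt hderiv
      (hgc.intervalIntegrable t b)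
    rw [this]
    calc ‖Complex.exp (c * (f b : ℂ)) / c - Complex.exp (c * (f t : ℂ)) / c‖
        ≤ ‖Complex.exp (c * (f b : ℂ)) / c‖ + ‖Complex.exp (c * (f t : ℂ)) / c‖ :=
          norm_sub_le _ _
      _ = 1 / (2 * Real.pi) + 1 / (2 * Real.pi) := by rw [hEnorm, hEnorm]
      _ = C := by
          have hpi := Real.pi_ne_zero
          rw [hC]; field_simp
          norm_num
  -- rewrite the target integral
  have hcongr : (∫ x in a..b, Complex.exp (2 * Real.pi * Complex.I * (f x : ℂ)))
      = ∫ x in a..b, ψ x • g x := by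
    apply intervalIntegral.integral_congr
    intro x hx
    have hxs : x ∈ s := by rwa [Set.uIcc_of_le hab] at hx
    simp only [hψ, hg]
    rw [hproj_id x hxs]
    have hdx : (d x : ℂ) ≠ 0 := by
      exact_mod_cast (hdpos x hxs).ne'
    rw [Complex.real_smul]
    push_cast
    rw [← hc]
    field_simp
  rw [hcongr]
  -- bounds on ψ
  have hψ_a : 0 < ψ a := by
    rw [hψ]; simp only
    exact inv_pos.2 (hdpos _ (hproj_mem a))
  have hψle : ∀ x, ψ x ≤ 1 / m := by
    intro x
    rw [hψ]; simp only
    rw [one_div]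
    exact inv_anti₀ hm (hlb _ (hproj_mem x))
  have hπ3 : (3:ℝ) < Real.pi := Real.pi_gt_three
  have hfinal : C * (1/m) + 2 * C * (1/m) ≤ 4 / m := by
    have hpi := Real.pi_pos
    have heq : C * (1/m) + 2 * C * (1/m) = 3 / (Real.pi * m) := by
      rw [hC]; field_simp; ring
    rw [heq, div_le_div_iff₀ (by positivity) hm]
    nlinarith
  rcases hmono with h | h
  · -- d monotone ⇒ ψ antitone
    have hψanti : Antitone ψ := by
      intro x y hxy
      simp only [hψ]
      apply inv_anti₀ (hdpos _ (hproj_mem x))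
      exact h (hproj_mem x) (hproj_mem y) (hproj_monotone hxy)
    have := key_anti hab g hgc C hC0 hFTC ψ hψanti hψc
    calc ‖∫ x in a..b, ψ x • g x‖ ≤ C * |ψ a| + 2 * C * (ψ a - ψ b) := this
      _ ≤ C * (1/m) + 2 * C * (1/m) := by
          apply add_le_add
          · apply mul_le_mul_of_nonneg_left _ hC0
            rw [abs_of_pos hψ_a]; exact hψle a
          · apply mul_le_mul_of_nonneg_left _ (by positivity)
            have h1 := hψle a
            have h2 : 0 < ψ b := inv_pos.2 (hdpos _ (hproj_mem b))
            linarith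
      _ ≤ 4 / m := hfinal
  · -- d antitone ⇒ ψ monotone
    have hψmono : Monotone ψ := by
      intro x y hxy
      simp only [hψ]
      apply inv_anti₀ (hdpos _ (hproj_mem y))
      exact h (hproj_mem x) (hproj_mem y) (hproj_monotone hxy)
    have := key_mono hab g hgc C hC0 hFTC ψ hψmono hψc
    calc ‖∫ x in a..b, ψ x • g x‖ ≤ C * |ψ a| + 2 * C * (ψ b - ψ a) := this
      _ ≤ C * (1/m) + 2 * C * (1/m) := by
          apply add_le_add
          · apply mul_le_mul_of_nonneg_left _ hC0
            rw [abs_of_pos hψ_a]; exact hψle a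
          · apply mul_le_mul_of_nonneg_left _ (by positivity)
            have h1 := hψle b
            linarith
      _ ≤ 4 / m := hfinal
end

section
/- Let ξ : ℤ₊ → ℂ be a wide-sense stationary sequence with spectral measure ρ on the circle, i.e. E[ξ(n₁) conj(ξ(n₂))] = ρ̂(n₂ − n₁) = ∫_{−π}^{π} e^{−i(n₂−n₁)t} dρ(t), where ρ is a finite nonnegative measure. Then for every r > 0 and θ ∈ [−π, π], E|F_ξ(r e^{iθ})|² = ∫_{−π}^{π} e^{2r cos(θ+t)} dρ(t), where F_ξ(z) = ∑_{n≥0} ξ(n) z^n/n!. -/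
open MeasureTheory Complex
open scoped ENNReal NNReal

private lemma summable_norm_exp_series (w : ℂ) :
    Summable fun n : ℕ => ‖w ^ n / (n.factorial : ℂ)‖ :=
  (Real.summable_pow_div_factorial ‖w‖).congr fun n => by
    simp [norm_div, norm_pow]

private lemma tsum_exp_series (w : ℂ) :
    ∑' n : ℕ, w ^ n / (n.factorial : ℂ) = Complex.exp w := by
  rw [Complex.exp_eq_exp_ℂ, NormedSpace.exp_eq_tsum_div]

private lemma tsum_prod_exp (u v : ℂ) :
    ∑' p : ℕ × ℕ, (u ^ p.1 / (p.1.factorial : ℂ)) * (v ^ p.2 / (p.2.factorial : ℂ)) =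
      Complex.exp (u + v) := by
  rw [← tsum_mul_tsum_of_summable_norm (summable_norm_exp_series u) (summable_norm_exp_series v),
    tsum_exp_series, tsum_exp_series, Complex.exp_add]

private lemma conj_z (r θ : ℝ) :
    (starRingEnd ℂ) ((r : ℂ) * Complex.exp (θ * Complex.I)) =
      (r : ℂ) * Complex.exp (-(θ : ℂ) * Complex.I) := by
  rw [map_mul, Complex.conj_ofReal, ← Complex.exp_conj]
  congr 2
  rw [map_mul, Complex.conj_ofReal, Complex.conj_I]
  ring

private lemma harg (r θ t : ℝ) :
    (r : ℂ) * Complex.exp (θ * Complex.I) * Complex.exp (t * Complex.I) +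
      (starRingEnd ℂ) ((r : ℂ) * Complex.exp (θ * Complex.I)) *
        Complex.exp (-(t : ℂ) * Complex.I) =
      ((2 * r * Real.cos (θ + t) : ℝ) : ℂ) := by
  rw [conj_z]
  have h1 : (r : ℂ) * Complex.exp (θ * Complex.I) * Complex.exp (t * Complex.I) =
      (r : ℂ) * Complex.exp (((θ + t : ℝ) : ℂ) * Complex.I) := by
    rw [mul_assoc, ← Complex.exp_add]
    push_cast
    ring_nf
  have h2 : (r : ℂ) * Complex.exp (-(θ : ℂ) * Complex.I) * Complex.exp (-(t : ℂ) * Complex.I) =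
      (r : ℂ) * Complex.exp (-((θ + t : ℝ) : ℂ) * Complex.I) := by
    rw [mul_assoc, ← Complex.exp_add]
    push_cast
    ring_nf
  rw [h1, h2, Complex.exp_mul_I, Complex.exp_mul_I, Complex.cos_neg, Complex.sin_neg]
  push_cast [Complex.ofReal_cos]
  ring

/-- Lemma 8.1 of the paper: for a wide-sense stationary sequence `ξ` with spectral
measure `ρ` (i.e. `E[ξ(n₁) conj(ξ(n₂))] = ∫_{-π}^{π} e^{-i(n₂-n₁)t} dρ(t)`),
`E|F_ξ(re^{iθ})|² = ∫_{-π}^{π} e^{2r cos(θ+t)} dρ(t)`, where `F_ξ(z) = ∑ ξ(n) z^n/n!`. -/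
theorem stmt_9 {Ω : Type*} [MeasurableSpace Ω] (μ : Measure Ω) [IsProbabilityMeasure μ]
    (ξ : ℕ → Ω → ℂ) (hmeas : ∀ n, Measurable (ξ n)) (hL2 : ∀ n, MemLp (ξ n) 2 μ)
    (ρ : Measure ℝ) [IsFiniteMeasure ρ] (hρsupp : ρ (Set.Icc (-Real.pi) Real.pi)ᶜ = 0)
    (hspec : ∀ n₁ n₂ : ℕ,
      ∫ ω, ξ n₁ ω * (starRingEnd ℂ) (ξ n₂ ω) ∂μ =
        ∫ t in Set.Icc (-Real.pi) Real.pi,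
          Complex.exp (-((n₂ : ℝ) - (n₁ : ℝ)) * t * Complex.I) ∂ρ) :
    ∀ r : ℝ, 0 < r → ∀ θ ∈ Set.Icc (-Real.pi) Real.pi,
      ∫ ω, ‖∑' n : ℕ, ξ n ω * ((r : ℂ) * Complex.exp (θ * Complex.I)) ^ n /
          (Nat.factorial n)‖ ^ 2 ∂μ =
        ∫ t in Set.Icc (-Real.pi) Real.pi, Real.exp (2 * r * Real.cos (θ + t)) ∂ρ := by
  intro r hr θ _
  set z : ℂ := (r : ℂ) * Complex.exp (θ * Complex.I) with hz
  set a : ℕ → Ω → ℂ := fun n ω => ξ n ω * z ^ n / (n.factorial : ℂ) with ha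
  -- norm of z
  have hzr : ‖z‖ = r := by
    rw [hz, norm_mul, Complex.norm_real, Real.norm_eq_abs, abs_of_pos hr,
      Complex.norm_exp_ofReal_mul_I, mul_one]
  have hnorm_a : ∀ n ω, ((‖a n ω‖₊ : ℝ≥0∞)) =
      (‖ξ n ω‖₊ : ℝ≥0∞) * ENNReal.ofReal (r ^ n / n.factorial) := by
    intro n ω
    rw [← enorm_eq_nnnorm, ← enorm_eq_nnnorm, ← ofReal_norm, ← ofReal_norm,
      ← ENNReal.ofReal_mul (norm_nonneg _)]
    congr 1
    have : ‖a n ω‖ = ‖ξ n ω‖ * ‖z‖ ^ n / (n.factorial : ℝ) := by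
      rw [ha]
      simp [norm_div, norm_mul, norm_pow]
    rw [this, hzr]
    ring
  set V : ℝ≥0∞ := ENNReal.ofReal ((ρ (Set.Icc (-Real.pi) Real.pi)).toReal) with hV
  have hVne : V ≠ ⊤ := ENNReal.ofReal_ne_top
  -- integrability of |ξ n|²
  have hsq_int : ∀ n, Integrable (fun ω => Complex.normSq (ξ n ω)) μ := by
    intro n
    have h := (hL2 n).integrable_norm_rpow (by norm_num) (by norm_num)
    refine h.congr (Filter.Eventually.of_forall fun ω => ?_)
    show ‖ξ n ω‖ ^ (2 : ℝ≥0∞).toReal = Complex.normSq (ξ n ω)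
    rw [Complex.normSq_eq_norm_sq,
      show (2 : ℝ≥0∞).toReal = ((2 : ℕ) : ℝ) by norm_num, Real.rpow_natCast]
  have hval : ∀ n, ∫ ω, Complex.normSq (ξ n ω) ∂μ =
      (ρ (Set.Icc (-Real.pi) Real.pi)).toReal := by
    intro n
    have h := hspec n n
    simp only [sub_self, neg_zero, Complex.ofReal_zero, zero_mul, Complex.exp_zero,
      integral_const, Measure.restrict_apply_univ, Complex.real_smul, Complex.ofReal_one, mul_one] at h
    have h2 : ∫ ω, ξ n ω * (starRingEnd ℂ) (ξ n ω) ∂μ =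
        ((∫ ω, Complex.normSq (ξ n ω) ∂μ : ℝ) : ℂ) :=
      (integral_congr_ae (Filter.Eventually.of_forall fun ω =>
        Complex.mul_conj (ξ n ω))).trans integral_ofReal
    rw [h2] at h
    simp only [Measure.real, Measure.restrict_apply_univ] at h
    exact_mod_cast h
  have hxi2 : ∀ n, ∫⁻ ω, (‖ξ n ω‖₊ : ℝ≥0∞) ^ (2 : ℝ) ∂μ = V := by
    intro n
    rw [hV, ← hval n, ofReal_integral_eq_lintegral_ofReal (hsq_int n)
      (Filter.Eventually.of_forall fun ω => Complex.normSq_nonneg _)]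
    refine lintegral_congr fun ω => ?_
    rw [Complex.normSq_eq_norm_sq, ← Real.rpow_natCast ‖ξ n ω‖ 2,
      ← ENNReal.ofReal_rpow_of_nonneg (norm_nonneg _) (by norm_num),
      ofReal_norm, enorm_eq_nnnorm]
    norm_num
  have hmeasnn : ∀ n, AEMeasurable (fun ω => (‖ξ n ω‖₊ : ℝ≥0∞)) μ := fun n =>
    ((hmeas n).nnnorm.coe_nnreal_ennreal).aemeasurable
  have hxiCS : ∀ n m, ∫⁻ ω, (‖ξ n ω‖₊ : ℝ≥0∞) * (‖ξ m ω‖₊ : ℝ≥0∞) ∂μ ≤ V := by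
    intro n m
    have h22 : Real.HolderConjugate 2 2 := Real.HolderConjugate.two_two
    have h := ENNReal.lintegral_mul_le_Lp_mul_Lq μ h22 (hmeasnn n) (hmeasnn m)
    simp only [Pi.mul_apply] at h
    rw [hxi2 n, hxi2 m] at h
    refine h.trans (le_of_eq ?_)
    rw [← ENNReal.rpow_add_of_nonneg (1 / 2) (1 / 2) (by norm_num) (by norm_num)]
    norm_num
  set s : ℕ → ℝ≥0∞ := fun n => ENNReal.ofReal (r ^ n / n.factorial) with hs
  have hE : ∑' n, s n ≠ ⊤ := by
    rw [hs, ← ENNReal.ofReal_tsum_of_nonneg (fun n => by positivity)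
      (Real.summable_pow_div_factorial r)]
    exact ENNReal.ofReal_ne_top

  have hterm : ∀ p : ℕ × ℕ,
      ∫⁻ ω, (‖a p.1 ω * (starRingEnd ℂ) (a p.2 ω)‖₊ : ℝ≥0∞) ∂μ ≤ V * (s p.1 * s p.2) := by
    intro p
    have heq : ∀ ω, ((‖a p.1 ω * (starRingEnd ℂ) (a p.2 ω)‖₊ : ℝ≥0∞)) =
        ((‖ξ p.1 ω‖₊ : ℝ≥0∞) * (‖ξ p.2 ω‖₊ : ℝ≥0∞)) * (s p.1 * s p.2) := by
      intro ω
      rw [nnnorm_mul, ENNReal.coe_mul, RCLike.nnnorm_conj, hnorm_a, hnorm_a]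
      ring
    calc ∫⁻ ω, (‖a p.1 ω * (starRingEnd ℂ) (a p.2 ω)‖₊ : ℝ≥0∞) ∂μ
        = ∫⁻ ω, ((‖ξ p.1 ω‖₊ : ℝ≥0∞) * (‖ξ p.2 ω‖₊ : ℝ≥0∞)) * (s p.1 * s p.2) ∂μ :=
          lintegral_congr heq
      _ = (∫⁻ ω, (‖ξ p.1 ω‖₊ : ℝ≥0∞) * (‖ξ p.2 ω‖₊ : ℝ≥0∞) ∂μ) * (s p.1 * s p.2) :=
          lintegral_mul_const'' _ ((hmeasnn p.1).mul (hmeasnn p.2))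
      _ ≤ V * (s p.1 * s p.2) := mul_le_mul_left (hxiCS p.1 p.2) _
  have hprodsum : ∑' p : ℕ × ℕ, V * (s p.1 * s p.2) ≠ ⊤ := by
    have : ∑' p : ℕ × ℕ, V * (s p.1 * s p.2) = V * ((∑' n, s n) * (∑' n, s n)) := by
      rw [ENNReal.tsum_mul_left]
      congr 1
      rw [ENNReal.tsum_prod']
      simp_rw [ENNReal.tsum_mul_left, ENNReal.tsum_mul_right]
    rw [this]
    exact ENNReal.mul_ne_top hVne (ENNReal.mul_ne_top hE hE)
  have hSsum : ∑' p : ℕ × ℕ,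
      ∫⁻ ω, (‖a p.1 ω * (starRingEnd ℂ) (a p.2 ω)‖₊ : ℝ≥0∞) ∂μ ≠ ⊤ :=
    ne_top_of_le_ne_top hprodsum (ENNReal.tsum_le_tsum hterm)
  have hmeasa : ∀ n, Measurable (a n) := fun n => ((hmeas n).mul_const _).div_const _
  have hmeasc : ∀ m, Measurable fun ω => (starRingEnd ℂ) (a m ω) := fun m =>
    Complex.continuous_conj.measurable.comp (hmeasa m)
  have haesum : ∀ᵐ ω ∂μ, Summable fun n => ‖a n ω‖₊ := by
    have hmeas2 : ∀ p : ℕ × ℕ,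
        AEMeasurable (fun ω => (‖a p.1 ω‖₊ : ℝ≥0∞) * (‖a p.2 ω‖₊ : ℝ≥0∞)) μ := fun p =>
      (((hmeasa p.1).nnnorm.coe_nnreal_ennreal).mul
        ((hmeasa p.2).nnnorm.coe_nnreal_ennreal)).aemeasurable
    have h1 : ∫⁻ ω, ∑' p : ℕ × ℕ, (‖a p.1 ω‖₊ : ℝ≥0∞) * (‖a p.2 ω‖₊ : ℝ≥0∞) ∂μ ≠ ⊤ := by
      rw [lintegral_tsum hmeas2]
      refine ne_top_of_le_ne_top hSsum (ENNReal.tsum_le_tsum fun p => ?_)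
      refine le_of_eq (lintegral_congr fun ω => ?_)
      rw [nnnorm_mul, ENNReal.coe_mul, RCLike.nnnorm_conj]
    filter_upwards [ae_lt_top' (AEMeasurable.ennreal_tsum hmeas2) h1] with ω hω
    have hfac : ∑' p : ℕ × ℕ, (‖a p.1 ω‖₊ : ℝ≥0∞) * (‖a p.2 ω‖₊ : ℝ≥0∞) =
        (∑' n, (‖a n ω‖₊ : ℝ≥0∞)) * ∑' n, (‖a n ω‖₊ : ℝ≥0∞) := by
      rw [ENNReal.tsum_prod']
      simp_rw [ENNReal.tsum_mul_left, ENNReal.tsum_mul_right]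
    rw [hfac] at hω
    have hne : ∑' n, (‖a n ω‖₊ : ℝ≥0∞) ≠ ⊤ := by
      intro hcon
      rw [hcon, ENNReal.top_mul_top] at hω
      exact absurd hω (lt_irrefl _)
    exact ENNReal.tsum_coe_ne_top_iff_summable.mp hne
  have hg : ∀ᵐ ω ∂μ, (∑' n, a n ω) * (starRingEnd ℂ) (∑' n, a n ω) =
      ∑' p : ℕ × ℕ, a p.1 ω * (starRingEnd ℂ) (a p.2 ω) := by
    filter_upwards [haesum] with ω hω
    have hn : Summable fun n => ‖a n ω‖ := by
      have h := NNReal.summable_coe.mpr hω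
      simpa [coe_nnnorm] using h
    have hc : Summable fun n => ‖(starRingEnd ℂ) (a n ω)‖ :=
      hn.congr fun n => (RCLike.norm_conj _).symm
    have hstar : (starRingEnd ℂ) (∑' n, a n ω) = ∑' n, (starRingEnd ℂ) (a n ω) := tsum_star
    rw [hstar, ← tsum_mul_tsum_of_summable_norm hn hc]
  have hint_prod : ∫ ω, ∑' p : ℕ × ℕ, a p.1 ω * (starRingEnd ℂ) (a p.2 ω) ∂μ =
      ∑' p : ℕ × ℕ, ∫ ω, a p.1 ω * (starRingEnd ℂ) (a p.2 ω) ∂μ :=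
    integral_tsum (fun p => ((hmeasa p.1).mul (hmeasc p.2)).aestronglyMeasurable) hSsum
  set G : ℕ × ℕ → ℝ → ℂ := fun p t =>
    Complex.exp (-((p.2 : ℝ) - (p.1 : ℝ)) * t * Complex.I) *
      ((z ^ p.1 / (p.1.factorial : ℂ)) * (starRingEnd ℂ) (z ^ p.2 / (p.2.factorial : ℂ)))
    with hG
  have hptint : ∀ p : ℕ × ℕ, ∫ ω, a p.1 ω * (starRingEnd ℂ) (a p.2 ω) ∂μ =
      ∫ t in Set.Icc (-Real.pi) Real.pi, G p t ∂ρ := by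
    intro p
    have h1 : ∀ ω, a p.1 ω * (starRingEnd ℂ) (a p.2 ω) =
        (ξ p.1 ω * (starRingEnd ℂ) (ξ p.2 ω)) *
          ((z ^ p.1 / (p.1.factorial : ℂ)) * (starRingEnd ℂ) (z ^ p.2 / (p.2.factorial : ℂ))) := by
      intro ω
      simp only [ha, map_div₀, map_mul, map_pow, Complex.conj_natCast]
      ring
    simp only [h1, hG]
    rw [integral_mul_const, hspec p.1 p.2, ← integral_mul_const]
  have hGnorm : ∀ (p : ℕ × ℕ) (t : ℝ), ((‖G p t‖₊ : ℝ≥0∞)) = s p.1 * s p.2 := by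
    intro p t
    rw [← enorm_eq_nnnorm, ← ofReal_norm, hG]
    have he : ‖Complex.exp (-((p.2 : ℝ) - (p.1 : ℝ)) * t * Complex.I)‖ = 1 := by
      rw [show (-((p.2 : ℝ) - (p.1 : ℝ)) * t * Complex.I)
          = ((-((p.2 : ℝ) - (p.1 : ℝ)) * t : ℝ) : ℂ) * Complex.I by push_cast; ring,
        Complex.norm_exp_ofReal_mul_I]
    rw [norm_mul, he, one_mul, norm_mul, RCLike.norm_conj, norm_div, norm_div,
      norm_pow, norm_pow, hzr, Complex.norm_natCast, Complex.norm_natCast,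
      ENNReal.ofReal_mul (by positivity)]
  have hGmeas : ∀ p : ℕ × ℕ,
      AEStronglyMeasurable (G p) (ρ.restrict (Set.Icc (-Real.pi) Real.pi)) := by
    intro p
    refine Continuous.aestronglyMeasurable ?_
    rw [hG]
    fun_prop
  have hGsum : ∑' p : ℕ × ℕ,
      ∫⁻ t in Set.Icc (-Real.pi) Real.pi, (‖G p t‖₊ : ℝ≥0∞) ∂ρ ≠ ⊤ := by
    have h1 : ∀ p : ℕ × ℕ, ∫⁻ t in Set.Icc (-Real.pi) Real.pi, (‖G p t‖₊ : ℝ≥0∞) ∂ρ =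
        (s p.1 * s p.2) * ρ (Set.Icc (-Real.pi) Real.pi) := by
      intro p
      simp_rw [hGnorm]
      rw [lintegral_const, Measure.restrict_apply_univ]
    rw [tsum_congr h1]
    have h2 : ∑' p : ℕ × ℕ, (s p.1 * s p.2) * ρ (Set.Icc (-Real.pi) Real.pi) =
        ((∑' n, s n) * (∑' n, s n)) * ρ (Set.Icc (-Real.pi) Real.pi) := by
      rw [ENNReal.tsum_mul_right]
      congr 1
      rw [ENNReal.tsum_prod']
      simp_rw [ENNReal.tsum_mul_left, ENNReal.tsum_mul_right]
    rw [h2]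
    exact ENNReal.mul_ne_top (ENNReal.mul_ne_top hE hE) (measure_ne_top ρ _)
  have hswap : ∑' p : ℕ × ℕ, ∫ t in Set.Icc (-Real.pi) Real.pi, G p t ∂ρ =
      ∫ t in Set.Icc (-Real.pi) Real.pi, ∑' p : ℕ × ℕ, G p t ∂ρ :=
    (integral_tsum hGmeas hGsum).symm
  have hpt : ∀ t : ℝ, ∑' p : ℕ × ℕ, G p t =
      ((Real.exp (2 * r * Real.cos (θ + t)) : ℝ) : ℂ) := by
    intro t
    have h1 : ∀ p : ℕ × ℕ, G p t =
        ((z * Complex.exp ((t : ℂ) * Complex.I)) ^ p.1 / (p.1.factorial : ℂ)) *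
          (((starRingEnd ℂ) z * Complex.exp (-(t : ℂ) * Complex.I)) ^ p.2 /
            (p.2.factorial : ℂ)) := by
      intro p
      simp only [hG]
      have he : Complex.exp (-((p.2 : ℝ) - (p.1 : ℝ)) * t * Complex.I) =
          Complex.exp ((t : ℂ) * Complex.I) ^ p.1 *
            Complex.exp (-(t : ℂ) * Complex.I) ^ p.2 := by
        rw [← Complex.exp_nat_mul, ← Complex.exp_nat_mul, ← Complex.exp_add]
        congr 1
        push_cast
        ring
      rw [he]
      simp only [map_div₀, map_pow, Complex.conj_natCast, mul_pow]
      ring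
    rw [tsum_congr h1, tsum_prod_exp, hz, harg, ← Complex.ofReal_exp]
  have main : ((∫ ω, ‖∑' n, a n ω‖ ^ 2 ∂μ : ℝ) : ℂ) =
      ((∫ t in Set.Icc (-Real.pi) Real.pi, Real.exp (2 * r * Real.cos (θ + t)) ∂ρ : ℝ) : ℂ) := by
    refine (integral_ofReal.symm.trans ?_).trans integral_ofReal
    calc ∫ ω, ((‖∑' n, a n ω‖ ^ 2 : ℝ) : ℂ) ∂μ
        = ∫ ω, (∑' n, a n ω) * (starRingEnd ℂ) (∑' n, a n ω) ∂μ := by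
          refine integral_congr_ae (Filter.Eventually.of_forall fun ω => ?_)
          show ((‖∑' n, a n ω‖ ^ 2 : ℝ) : ℂ) =
            (∑' n, a n ω) * (starRingEnd ℂ) (∑' n, a n ω)
          rw [Complex.mul_conj, Complex.normSq_eq_norm_sq]
      _ = ∫ ω, ∑' p : ℕ × ℕ, a p.1 ω * (starRingEnd ℂ) (a p.2 ω) ∂μ := integral_congr_ae hg
      _ = ∑' p : ℕ × ℕ, ∫ ω, a p.1 ω * (starRingEnd ℂ) (a p.2 ω) ∂μ := hint_prod
      _ = ∑' p : ℕ × ℕ, ∫ t in Set.Icc (-Real.pi) Real.pi, G p t ∂ρ := tsum_congr hptint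
      _ = ∫ t in Set.Icc (-Real.pi) Real.pi, ∑' p : ℕ × ℕ, G p t ∂ρ := hswap
      _ = ∫ t in Set.Icc (-Real.pi) Real.pi,
            ((Real.exp (2 * r * Real.cos (θ + t)) : ℝ) : ℂ) ∂ρ := by
          refine integral_congr_ae (Filter.Eventually.of_forall fun t => ?_)
          exact hpt t
  have main2 : ∫ ω, ‖∑' n, a n ω‖ ^ 2 ∂μ =
      ∫ t in Set.Icc (-Real.pi) Real.pi, Real.exp (2 * r * Real.cos (θ + t)) ∂ρ := by
    exact_mod_cast main
  simpa only [ha] using main2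
end

section
/- Let r : ℕ → [0,1] satisfy r(t) = O((log t)^{−(1+2ε)}) for some ε > 0. Then for R → ∞, ∑_{ℓ ≥ 1} r(⌊ℓ/4⌋) e^{−ℓ²/(8R)} = O(√R / (log R)^{1+ε}). -/
open Real Filter Finset


private lemma aux_inv {a : ℝ} (h0 : 0 < a) (h1 : a ≤ 1) :
    (1 - Real.exp (-a))⁻¹ ≤ 2 / a := by
  have hqa : Real.exp (-a) ≤ 1 - a / 2 := by
    have h2 : a + 1 ≤ Real.exp a := Real.add_one_le_exp a
    rw [Real.exp_neg]
    calc (Real.exp a)⁻¹ ≤ (a + 1)⁻¹ := inv_anti₀ (by linarith) h2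
    _ ≤ 1 - a / 2 := by
        rw [inv_eq_one_div, div_le_iff₀ (by linarith : (0:ℝ) < a + 1)]
        nlinarith
  have h3 : a / 2 ≤ 1 - Real.exp (-a) := by linarith
  calc (1 - Real.exp (-a))⁻¹ ≤ (a / 2)⁻¹ := inv_anti₀ (by linarith) h3
  _ = 2 / a := by rw [inv_div]

set_option maxHeartbeats 2000000 in
/-- Correlation-sum estimate: if `r : ℕ → [0,1]` satisfies `r(t) = O((log t)^{-(1+2ε)})`,
then `∑_{ℓ ≥ 1} r(⌊ℓ/4⌋) e^{-ℓ²/(8R)} = O(√R/(log R)^{1+ε})` as `R → ∞`. -/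
theorem stmt_13 (r : ℕ → ℝ) (hr01 : ∀ t, r t ∈ Set.Icc (0 : ℝ) 1)
    (ε : ℝ) (hε : 0 < ε)
    (hdecay : ∃ C : ℝ, ∀ t : ℕ, 2 ≤ t → r t ≤ C / (Real.log t) ^ (1 + 2 * ε)) :
    ∃ C' R₀ : ℝ, 0 < C' ∧ ∀ R : ℝ, R₀ ≤ R →
      ∑' ℓ : ℕ, r ((ℓ + 1) / 4) * Real.exp (-((ℓ : ℝ) + 1) ^ 2 / (8 * R)) ≤
        C' * Real.sqrt R / (Real.log R) ^ (1 + ε) := by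
  classical
  obtain ⟨C, hC⟩ := hdecay
  set C₁ : ℝ := max C 0 with hC₁def
  have hC₁ : 0 ≤ C₁ := le_max_right _ _
  have hCC₁ : C ≤ C₁ := le_max_left _ _
  set n : ℕ := ⌈1 / (2 * ε)⌉₊ with hndef
  have hn : 1 ≤ 2 * ε * n := by
    have h1 : (1 / (2 * ε) : ℝ) ≤ n := Nat.le_ceil _
    have h2 : 0 < 2 * ε := by linarith
    calc (1:ℝ) = 2 * ε * (1 / (2 * ε)) := by field_simp
    _ ≤ 2 * ε * n := by nlinarith
  set K₂ : ℝ := C₁ * (8:ℝ) ^ (1 + 2 * ε) with hK₂def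
  set K₃ : ℝ := 16 * (n.factorial : ℝ) * 8 ^ n with hK₃def
  have hK₂0 : 0 ≤ K₂ := by positivity
  have hK₃0 : 0 < K₃ := by positivity
  set C' : ℝ := 1 + K₂ + K₃ with hC'def
  have hC'0 : 0 < C' := by positivity
  have hev : ∀ᶠ R : ℝ in atTop,
      ∑' ℓ : ℕ, r ((ℓ + 1) / 4) * Real.exp (-((ℓ : ℝ) + 1) ^ 2 / (8 * R)) ≤
        C' * Real.sqrt R / (Real.log R) ^ (1 + ε) := by
    have hB : ∀ᶠ R : ℝ in atTop, (Real.log R) ^ (1 + ε) ≤ R ^ ((4:ℝ)⁻¹) := by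
      have h := (isLittleO_log_rpow_rpow_atTop (1 + ε)
        (show (0:ℝ) < (4:ℝ)⁻¹ by norm_num)).bound one_pos
      filter_upwards [h, eventually_ge_atTop (1:ℝ)] with R h h1
      have h0 : (0:ℝ) ≤ R := by linarith
      calc (Real.log R) ^ (1 + ε) ≤ ‖(Real.log R) ^ (1 + ε)‖ := le_norm_self _
      _ ≤ 1 * ‖R ^ ((4:ℝ)⁻¹)‖ := h
      _ = R ^ ((4:ℝ)⁻¹) := by
          rw [one_mul, Real.norm_eq_abs, abs_of_nonneg (Real.rpow_nonneg h0 _)]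
    have hD : ∀ᶠ R : ℝ in atTop, (Real.log R) ^ ε ≤ Real.sqrt R := by
      have h := (isLittleO_log_rpow_rpow_atTop ε
        (show (0:ℝ) < (2:ℝ)⁻¹ by norm_num)).bound one_pos
      filter_upwards [h, eventually_ge_atTop (1:ℝ)] with R h h1
      have h0 : (0:ℝ) ≤ R := by linarith
      calc (Real.log R) ^ ε ≤ ‖(Real.log R) ^ ε‖ := le_norm_self _
      _ ≤ 1 * ‖R ^ ((2:ℝ)⁻¹)‖ := h
      _ = R ^ ((2:ℝ)⁻¹) := by
          rw [one_mul, Real.norm_eq_abs, abs_of_nonneg (Real.rpow_nonneg h0 _)]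
      _ = Real.sqrt R := by rw [Real.sqrt_eq_rpow]; norm_num
    have hE : ∀ᶠ R : ℝ in atTop, (5:ℝ) ≤ R ^ ((8:ℝ)⁻¹) :=
      (tendsto_rpow_atTop (show (0:ℝ) < (8:ℝ)⁻¹ by norm_num)).eventually_ge_atTop 5
    have hA : ∀ᶠ R : ℝ in atTop, Real.exp 1 ≤ R := eventually_ge_atTop _
    filter_upwards [hA, hB, hD, hE] with R hA hB hD hE
    -- basic facts
    have hR0 : (0:ℝ) < R := lt_of_lt_of_le (Real.exp_pos 1) hA
    have hR1 : (1:ℝ) ≤ R := le_trans (Real.one_le_exp zero_le_one) hA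
    have hlog1 : (1:ℝ) ≤ Real.log R := by
      calc (1:ℝ) = Real.log (Real.exp 1) := (Real.log_exp 1).symm
      _ ≤ Real.log R := Real.log_le_log (Real.exp_pos 1) hA
    have hlog0 : (0:ℝ) < Real.log R := by linarith
    set z : ℝ := (Real.log R) ^ ε with hzdef
    have hz1 : (1:ℝ) ≤ z := by
      have := Real.rpow_le_rpow_of_exponent_le hlog1 (le_of_lt hε : (0:ℝ) ≤ ε)
      rwa [Real.rpow_zero] at this
    have hz0 : (0:ℝ) < z := by linarith
    have hsq1 : (1:ℝ) ≤ Real.sqrt R := by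
      rw [show (1:ℝ) = Real.sqrt 1 by simp]
      exact Real.sqrt_le_sqrt hR1
    have hsq0 : (0:ℝ) < Real.sqrt R := by linarith
    set L : ℝ := Real.sqrt R * z with hLdef
    have hL1 : (1:ℝ) ≤ L := one_le_mul_of_one_le_of_one_le hsq1 hz1
    have hL0 : (0:ℝ) < L := by linarith
    set N₁ : ℕ := ⌊R ^ ((4:ℝ)⁻¹)⌋₊ with hN₁def
    set N₂ : ℕ := ⌊L⌋₊ with hN₂def
    set a : ℝ := L / (8 * R) with hadef
    have ha0 : 0 < a := by positivity
    have hLR : L ≤ R := by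
      calc L = Real.sqrt R * z := rfl
      _ ≤ Real.sqrt R * Real.sqrt R := by nlinarith
      _ = R := Real.mul_self_sqrt (le_of_lt hR0)
    have ha1 : a ≤ 1 := by
      rw [hadef, div_le_one (by positivity)]
      linarith
    set f : ℕ → ℝ := fun ℓ => r ((ℓ + 1) / 4) * Real.exp (-((ℓ : ℝ) + 1) ^ 2 / (8 * R)) with hfdef
    have hf0 : ∀ ℓ, 0 ≤ f ℓ := by
      intro ℓ
      exact mul_nonneg (hr01 _).1 (Real.exp_nonneg _)
    have hfle1 : ∀ ℓ : ℕ, f ℓ ≤ 1 := by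
      intro ℓ
      have h1 : r ((ℓ + 1) / 4) ≤ 1 := (hr01 _).2
      have h2 : Real.exp (-((ℓ : ℝ) + 1) ^ 2 / (8 * R)) ≤ 1 := by
        rw [Real.exp_le_one_iff]
        have : (0:ℝ) ≤ ((ℓ : ℝ) + 1) ^ 2 := by positivity
        rw [neg_div]
        simp only [neg_nonpos]
        positivity
      calc f ℓ ≤ 1 * 1 := mul_le_mul h1 h2 (Real.exp_nonneg _) zero_le_one
      _ = 1 := by ring
    have hfexp : ∀ ℓ : ℕ, f ℓ ≤ Real.exp (-((ℓ : ℝ) + 1) ^ 2 / (8 * R)) := by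
      intro ℓ
      calc f ℓ ≤ 1 * Real.exp (-((ℓ : ℝ) + 1) ^ 2 / (8 * R)) :=
            mul_le_mul_of_nonneg_right (hr01 _).2 (Real.exp_nonneg _)
      _ = _ := one_mul _
    -- exp factor at most 1
    have hexp1 : ∀ x : ℝ, 0 ≤ x → Real.exp (-x / (8 * R)) ≤ 1 := by
      intro x hx
      rw [Real.exp_le_one_iff, neg_div]
      simp only [neg_nonpos]
      positivity
    have hmono : ∀ x y : ℝ, x ≤ y → Real.exp (-y / (8 * R)) ≤ Real.exp (-x / (8 * R)) := by
      intro x y hxy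
      apply Real.exp_le_exp.2
      have h8 : (0:ℝ) < 8 * R := by positivity
      rw [div_le_div_iff₀ h8 h8]
      nlinarith
    -- summability
    have hle : ∀ ℓ : ℕ, f ℓ ≤ Real.exp (-(1/(8*R))) ^ ℓ := by
      intro ℓ
      have he : Real.exp (-(1/(8*R))) ^ ℓ = Real.exp (-(ℓ:ℝ) / (8*R)) := by
        rw [← Real.exp_nat_mul]
        congr 1
        ring
      rw [he]
      exact le_trans (hfexp ℓ) (hmono (ℓ:ℝ) (((ℓ:ℝ)+1)^2) (by nlinarith [(Nat.cast_nonneg ℓ : (0:ℝ) ≤ (ℓ:ℝ))]))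
    have hsum : Summable f :=
      Summable.of_nonneg_of_le hf0 hle
        (summable_geometric_of_lt_one (Real.exp_nonneg _)
          (by rw [Real.exp_lt_one_iff]
              have h9 : (0:ℝ) < 1/(8*R) := by positivity
              linarith))
    -- splitting
    have hN₁₂ : N₁ ≤ N₂ := by
      apply Nat.floor_mono
      calc R ^ ((4:ℝ)⁻¹) ≤ R ^ ((2:ℝ)⁻¹) := Real.rpow_le_rpow_of_exponent_le hR1 (by norm_num)
      _ = Real.sqrt R := by rw [Real.sqrt_eq_rpow]; norm_num
      _ = Real.sqrt R * 1 := (mul_one _).symm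
      _ ≤ L := by rw [hLdef]; nlinarith
    have hrange : ∑ i ∈ range N₂, f i = ∑ i ∈ range N₁, f i + ∑ i ∈ Ico N₁ N₂, f i := by
      rw [range_eq_Ico, range_eq_Ico]
      exact (Finset.sum_Ico_consecutive f (Nat.zero_le N₁) hN₁₂).symm
    have hp1 : (1:ℝ) ≤ (Real.log R) ^ (1 + ε) := by
      have h := Real.rpow_le_rpow_of_exponent_le hlog1 (show (0:ℝ) ≤ 1 + ε by linarith)
      rwa [Real.rpow_zero] at h
    have hp0 : (0:ℝ) < (Real.log R) ^ (1 + ε) := by linarith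
    -- Bound 1 : initial segment
    have hbound1 : ∑ i ∈ range N₁, f i ≤ Real.sqrt R / (Real.log R) ^ (1 + ε) := by
      calc ∑ i ∈ range N₁, f i ≤ ∑ _i ∈ range N₁, (1:ℝ) :=
            Finset.sum_le_sum fun i _ => hfle1 i
      _ = (N₁ : ℝ) := by simp
      _ ≤ R ^ ((4:ℝ)⁻¹) := Nat.floor_le (by positivity)
      _ ≤ Real.sqrt R / (Real.log R) ^ (1 + ε) := by
          rw [le_div_iff₀ hp0]
          calc R ^ ((4:ℝ)⁻¹) * (Real.log R) ^ (1 + ε)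
              ≤ R ^ ((4:ℝ)⁻¹) * R ^ ((4:ℝ)⁻¹) :=
                mul_le_mul_of_nonneg_left hB (by positivity)
          _ = R ^ ((4:ℝ)⁻¹ + (4:ℝ)⁻¹) := (Real.rpow_add hR0 _ _).symm
          _ = Real.sqrt R := by rw [Real.sqrt_eq_rpow]; norm_num
    -- Bound 2 : middle range
    have h2p0 : (0:ℝ) < (Real.log R) ^ (1 + 2*ε) := Real.rpow_pos_of_pos hlog0 _
    have hterm2 : ∀ i ∈ Ico N₁ N₂, f i ≤ K₂ / (Real.log R) ^ (1 + 2*ε) := by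
      intro i hi
      obtain ⟨hi1, _hi2⟩ := mem_Ico.1 hi
      set t : ℕ := (i + 1) / 4 with htdef
      have hx0 : (0:ℝ) < R ^ ((8:ℝ)⁻¹) := Real.rpow_pos_of_pos hR0 _
      have hi1' : R ^ ((4:ℝ)⁻¹) < (i:ℝ) + 1 := by
        have h1 : R ^ ((4:ℝ)⁻¹) < (N₁:ℝ) + 1 := Nat.lt_floor_add_one _
        have h2 : (N₁:ℝ) ≤ (i:ℝ) := Nat.cast_le.2 hi1
        linarith
      have hsq : R ^ ((4:ℝ)⁻¹) = (R ^ ((8:ℝ)⁻¹)) ^ (2:ℕ) := by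
        rw [← Real.rpow_natCast (R ^ ((8:ℝ)⁻¹)) 2, ← Real.rpow_mul (le_of_lt hR0)]
        norm_num
      have htlb : R ^ ((8:ℝ)⁻¹) ≤ (t:ℝ) := by
        have h4 := Nat.div_add_mod (i + 1) 4
        have h5 : (i + 1) % 4 < 4 := Nat.mod_lt _ (by norm_num)
        have h4' : 4 * (t:ℝ) + (((i+1) % 4 : ℕ) : ℝ) = (i:ℝ) + 1 := by
          exact_mod_cast h4
        have h5' : (((i+1) % 4 : ℕ) : ℝ) < 4 := by exact_mod_cast h5
        nlinarith [hE, hi1', hsq]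
      have ht2 : 2 ≤ t := by
        have h2 : (2:ℝ) ≤ (t:ℝ) := by linarith
        exact_mod_cast h2
      have hlogt : Real.log R / 8 ≤ Real.log t := by
        have h1 : Real.log (R ^ ((8:ℝ)⁻¹)) ≤ Real.log (t:ℝ) := Real.log_le_log hx0 htlb
        rwa [Real.log_rpow hR0, inv_mul_eq_div] at h1
      have hlogt0 : (0:ℝ) < Real.log (t:ℝ) := by linarith
      have hd0 : (0:ℝ) < (Real.log R / 8) ^ (1 + 2*ε) :=
        Real.rpow_pos_of_pos (by linarith) _
      have hdt0 : (0:ℝ) < (Real.log (t:ℝ)) ^ (1 + 2*ε) := Real.rpow_pos_of_pos hlogt0 _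
      calc f i ≤ r t * 1 := by
            apply mul_le_mul_of_nonneg_left _ (hr01 t).1
            apply hexp1
            positivity
      _ = r t := mul_one _
      _ ≤ C / (Real.log (t:ℝ)) ^ (1 + 2*ε) := hC t ht2
      _ ≤ C₁ / (Real.log (t:ℝ)) ^ (1 + 2*ε) := by gcongr
      _ ≤ C₁ / (Real.log R / 8) ^ (1 + 2*ε) := by
            apply div_le_div_of_nonneg_left hC₁ hd0
            exact Real.rpow_le_rpow (by linarith) hlogt (by linarith)
      _ = K₂ / (Real.log R) ^ (1 + 2*ε) := by
            rw [Real.div_rpow (le_of_lt hlog0) (by norm_num : (0:ℝ) ≤ 8),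
              div_div_eq_mul_div, hK₂def]
    have hbound2 : ∑ i ∈ Ico N₁ N₂, f i ≤ K₂ * Real.sqrt R / (Real.log R) ^ (1 + ε) := by
      have hcard : ((Ico N₁ N₂).card : ℝ) ≤ L := by
        rw [Nat.card_Ico]
        calc ((N₂ - N₁ : ℕ) : ℝ) ≤ (N₂ : ℝ) := by exact_mod_cast Nat.sub_le _ _
        _ ≤ L := Nat.floor_le (le_of_lt hL0)
      calc ∑ i ∈ Ico N₁ N₂, f i ≤ ∑ _i ∈ Ico N₁ N₂, (K₂ / (Real.log R) ^ (1 + 2*ε)) :=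
            Finset.sum_le_sum hterm2
      _ = ((Ico N₁ N₂).card : ℝ) * (K₂ / (Real.log R) ^ (1 + 2*ε)) := by
            rw [Finset.sum_const, nsmul_eq_mul]
      _ ≤ L * (K₂ / (Real.log R) ^ (1 + 2*ε)) :=
            mul_le_mul_of_nonneg_right hcard (by positivity)
      _ = K₂ * Real.sqrt R / (Real.log R) ^ (1 + ε) := by
            rw [hLdef, hzdef, show (1 + 2*ε) = (1 + ε) + ε by ring,
              Real.rpow_add hlog0]
            have h1 : (Real.log R) ^ (1 + ε) ≠ 0 := ne_of_gt hp0
            have h2 : (Real.log R) ^ ε ≠ 0 := ne_of_gt (Real.rpow_pos_of_pos hlog0 _)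
            field_simp
    -- Bound 3 : tail
    have hq0 : (0:ℝ) ≤ Real.exp (-a) := Real.exp_nonneg _
    have hq1 : Real.exp (-a) < 1 := by rw [Real.exp_lt_one_iff]; linarith
    have htail : ∑' i : ℕ, f (i + N₂) ≤ K₃ * Real.sqrt R / (Real.log R) ^ (1 + ε) := by
      have hLL : L * L = R * z ^ 2 := by
        rw [hLdef]
        have hss : Real.sqrt R * Real.sqrt R = R := Real.mul_self_sqrt (le_of_lt hR0)
        nlinarith [hss]
      have hgs : Summable (fun i : ℕ => Real.exp (-a) ^ i * Real.exp (-(z^2/8))) :=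
        (summable_geometric_of_lt_one hq0 hq1).mul_right _
      have hterm : ∀ i : ℕ, f (i + N₂) ≤ Real.exp (-a) ^ i * Real.exp (-(z^2/8)) := by
        intro i
        refine le_trans (hfexp _) ?_
        rw [← Real.exp_nat_mul, ← Real.exp_add]
        apply Real.exp_le_exp.2
        have hdiv : ((i:ℝ) * L + L * L) / (8 * R) = (i:ℝ) * a + z^2/8 := by
          rw [hadef, hLL]
          field_simp
        have hm : L + (i:ℝ) ≤ ((i + N₂ : ℕ) : ℝ) + 1 := by
          push_cast
          have h1 : L < (N₂:ℝ) + 1 := Nat.lt_floor_add_one _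
          linarith
        have hi0 : (0:ℝ) ≤ (i:ℝ) := Nat.cast_nonneg i
        have hkey : (i:ℝ) * L + L * L ≤ (((i + N₂ : ℕ) : ℝ) + 1) ^ 2 := by nlinarith
        have h8 : (0:ℝ) < 8 * R := by positivity
        rw [show (i:ℝ) * -a + -(z^2/8) = -((i:ℝ) * a + z^2/8) by ring, ← hdiv,
          neg_div, neg_le_neg_iff]
        rw [div_le_div_iff₀ h8 h8]
        exact mul_le_mul_of_nonneg_right hkey (le_of_lt h8)
      have hsum2 : Summable fun i : ℕ => f (i + N₂) := (summable_nat_add_iff N₂).2 hsum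
      have htsum : ∑' i : ℕ, f (i + N₂) ≤ (1 - Real.exp (-a))⁻¹ * Real.exp (-(z^2/8)) := by
        calc ∑' i : ℕ, f (i + N₂)
            ≤ ∑' i : ℕ, Real.exp (-a) ^ i * Real.exp (-(z^2/8)) :=
              Summable.tsum_le_tsum hterm hsum2 hgs
        _ = (∑' i : ℕ, Real.exp (-a) ^ i) * Real.exp (-(z^2/8)) := tsum_mul_right
        _ = _ := by rw [tsum_geometric_of_lt_one hq0 hq1]
      have hinv : (1 - Real.exp (-a))⁻¹ ≤ 2/a := aux_inv ha0 ha1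
      have hqa : Real.exp (-a) ≤ 1 - a/2 := by
        have h2 : a + 1 ≤ Real.exp a := Real.add_one_le_exp a
        rw [Real.exp_neg]
        have h3 : (0:ℝ) < a + 1 := by linarith
        calc (Real.exp a)⁻¹ ≤ (a + 1)⁻¹ := inv_anti₀ h3 h2
        _ ≤ 1 - a/2 := by
            rw [inv_eq_one_div, div_le_iff₀ h3]
            nlinarith [ha0, ha1]
      have hinv0 : (0:ℝ) ≤ (1 - Real.exp (-a))⁻¹ := by
        apply inv_nonneg.2; linarith
      have hey : Real.exp (-(z^2/8)) ≤ (n.factorial : ℝ) * 8^n / z^(2*n) := by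
        have hy0 : (0:ℝ) ≤ z^2/8 := by positivity
        have h1 : (z^2/8)^n / (n.factorial : ℝ) ≤ Real.exp (z^2/8) :=
          Real.pow_div_factorial_le_exp _ hy0 n
        have h2 : (0:ℝ) < (z^2/8)^n / (n.factorial : ℝ) := by positivity
        rw [Real.exp_neg]
        calc (Real.exp (z^2/8))⁻¹ ≤ ((z^2/8)^n / (n.factorial : ℝ))⁻¹ :=
              inv_anti₀ h2 h1
        _ = (n.factorial : ℝ) * 8^n / z^(2*n) := by
            rw [div_pow, ← pow_mul]
            have hzz : z^(2*n) ≠ 0 := by positivity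
            have hnf : ((n.factorial : ℝ)) ≠ 0 := by positivity
            field_simp
      have h2a : 2/a = 16 * Real.sqrt R / z := by
        rw [hadef, hLdef, div_div_eq_mul_div]
        have hss : Real.sqrt R * Real.sqrt R = R := Real.mul_self_sqrt (le_of_lt hR0)
        rw [div_eq_div_iff (by positivity) (by positivity)]
        nlinarith [hss]
      calc ∑' i : ℕ, f (i + N₂) ≤ (1 - Real.exp (-a))⁻¹ * Real.exp (-(z^2/8)) := htsum
      _ ≤ (2/a) * ((n.factorial : ℝ) * 8^n / z^(2*n)) :=
            mul_le_mul hinv hey (Real.exp_nonneg _) (by positivity)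
      _ = K₃ * Real.sqrt R / z^(2*n+1) := by
          rw [h2a, hK₃def, pow_succ]
          have hz2 : z^(2*n) ≠ 0 := by positivity
          field_simp
      _ ≤ K₃ * Real.sqrt R / (Real.log R) ^ (1 + ε) := by
          apply div_le_div_of_nonneg_left (by positivity) hp0
          have h1 : z^(2*n+1) = (Real.log R) ^ (ε * (2*n+1 : ℕ)) := by
            rw [hzdef, ← Real.rpow_natCast ((Real.log R) ^ ε) (2*n+1),
              ← Real.rpow_mul (le_of_lt hlog0)]
          rw [h1]
          apply Real.rpow_le_rpow_of_exponent_le hlog1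
          push_cast
          nlinarith [hn]
    -- assembly
    have heq : C' * Real.sqrt R / (Real.log R) ^ (1 + ε)
        = Real.sqrt R / (Real.log R) ^ (1 + ε)
          + K₂ * Real.sqrt R / (Real.log R) ^ (1 + ε)
          + K₃ * Real.sqrt R / (Real.log R) ^ (1 + ε) := by
      rw [hC'def]; ring
    calc ∑' ℓ : ℕ, f ℓ = ∑ i ∈ range N₂, f i + ∑' i : ℕ, f (i + N₂) :=
          (Summable.sum_add_tsum_nat_add N₂ hsum).symm
    _ = ∑ i ∈ range N₁, f i + ∑ i ∈ Ico N₁ N₂, f i + ∑' i : ℕ, f (i + N₂) := by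
          rw [hrange]
    _ ≤ C' * Real.sqrt R / (Real.log R) ^ (1 + ε) := by
          rw [heq]
          exact add_le_add (add_le_add hbound1 hbound2) htail
  rw [eventually_atTop] at hev
  obtain ⟨R₀, hR₀⟩ := hev
  exact ⟨C', R₀, hC'0, hR₀⟩
end
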